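/- arXiv:math/9804063 — 9 statements merged into one kernel-verified Lean document; each statement's English description precedes it below -/
import Mathlib

section
/- Let M be an infinite subset of ℕ, let {P₁, P₂} be a partition of the set [M]^{<ω} of all finite subsets of M, let ξ be a countable ordinal, and let ℒ be a ξ-uniform family on M. Then there exists an infinite subset L of M such that either ℒ ∩ [L]^{<ω} ⊆ P₁ or ℒ ∩ [L]^{<ω} ⊆ P₂. -/
open Ordinal Filter Set

/-- `FinLT s t` : every element of `s` is smaller than every element of `t`
(i.e. `max s < min t`, vacuously true if one of them is empty). -/
def FinLT (s t : Finset ℕ) : Prop := ∀ a ∈ s, ∀ b ∈ t, a < b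

/-- `s` is an initial segment of `t`  (`s ⪯ t`). -/
def InitSeg (s t : Finset ℕ) : Prop :=
  s ⊆ t ∧ ∀ a ∈ t, ∀ b ∈ s, a ≤ b → a ∈ s

/-- `s` is a proper initial segment of `t`  (`s ≺ t`). -/
def PInitSeg (s t : Finset ℕ) : Prop := InitSeg s t ∧ s ≠ t

/-- `[M]^{<ω}` : the finite subsets of `M`. -/
def FinSubs (M : Set ℕ) : Set (Finset ℕ) := {s | ↑s ⊆ M}

/-- `ℒ(m) = {s : {m} ∪ s ∈ ℒ and {m} < s}`. -/
def famAt (L : Set (Finset ℕ)) (m : ℕ) : Set (Finset ℕ) :=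
  {s | insert m s ∈ L ∧ ∀ a ∈ s, m < a}

/-- `ℒ*` : the family of initial segments of elements of `ℒ`. -/
def famStar (L : Set (Finset ℕ)) : Set (Finset ℕ) := {t | ∃ s ∈ L, InitSeg t s}

/-- `ℒ_*` : the family of subsets of elements of `ℒ`. -/
def famSub (L : Set (Finset ℕ)) : Set (Finset ℕ) := {t | ∃ s ∈ L, t ⊆ s}

/-- A family is Sperner if no element is a proper subset of another. -/
def Sperner (L : Set (Finset ℕ)) : Prop := ¬ ∃ s ∈ L, ∃ t ∈ L, s ⊂ t

/-- A family is hereditary if it is closed under taking subsets. -/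
def Hereditary (F : Set (Finset ℕ)) : Prop := ∀ s ∈ F, ∀ t ⊆ s, t ∈ F

/-- `IsUniform ξ ℒ M` : `ℒ` is a `ξ`-uniform family on `M`. -/
inductive IsUniform : Ordinal.{0} → Set (Finset ℕ) → Set ℕ → Prop
  | zero (M : Set ℕ) : IsUniform 0 {(∅ : Finset ℕ)} M
  | succ (ζ : Ordinal.{0}) (L : Set (Finset ℕ)) (M : Set ℕ)
      (hsub : L ⊆ FinSubs M) (hne : (∅ : Finset ℕ) ∉ L)
      (h : ∀ m ∈ M, IsUniform ζ (famAt L m) (M ∩ Set.Ioi m)) :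
      IsUniform (ζ + 1) L M
  | limit (ξ : Ordinal.{0}) (L : Set (Finset ℕ)) (M : Set ℕ)
      (hlim : Order.IsSuccLimit ξ)
      (hsub : L ⊆ FinSubs M) (hne : (∅ : Finset ℕ) ∉ L)
      (ξm : ℕ → Ordinal.{0})
      (hmono : ∀ m ∈ M, ∀ n ∈ M, m < n → ξm m < ξm n)
      (hlt : ∀ m ∈ M, ξm m < ξ)
      (hsup : ∀ β < ξ, ∃ m ∈ M, β ≤ ξm m)
      (h : ∀ m ∈ M, IsUniform (ξm m) (famAt L m) (M ∩ Set.Ioi m)) :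
      IsUniform ξ L M

/-- The characteristic function of a finite set, as an element of the
product space `ℕ → Bool` (i.e. `2^ℕ`). -/
def toChar (s : Finset ℕ) : ℕ → Bool := fun n => decide (n ∈ s)

/-- A family of finite subsets of `ℕ` is pointwise closed if its image in `2^ℕ`
(under characteristic functions) is closed in the product topology. -/
def PtwiseClosed (F : Set (Finset ℕ)) : Prop := IsClosed (toChar '' F)

/-- The first strong Cantor--Bendixson derivative of `F` on `M`:
the set of `A ∈ F ∩ [M]^{<ω}` such that `A` is a cluster point (in `2^ℕ`) of
`{B ∈ F : B ⊆ A ∪ L}` for every infinite `L ⊆ M`. -/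
def derivOne (M : Set ℕ) (F : Set (Finset ℕ)) : Set (Finset ℕ) :=
  {A | A ∈ F ∧ ↑A ⊆ M ∧ ∀ L : Set ℕ, L ⊆ M → L.Infinite →
    AccPt (toChar A) (𝓟 (toChar '' {B | B ∈ F ∧ ↑B ⊆ ↑A ∪ L}))}

/-- The iterated strong Cantor--Bendixson derivatives `(F)^ξ_M`. -/
noncomputable def CBDeriv (F : Set (Finset ℕ)) (M : Set ℕ) (o : Ordinal.{0}) :
    Set (Finset ℕ) :=
  Ordinal.limitRecOn o F (fun _ ih => derivOne M ih)
    (fun o _ ih => ⋂ (β : Ordinal.{0}) (h : β < o), ih β h)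

/-- The strong Cantor--Bendixson index `s_M(F)` : the least ordinal `ξ`
with `(F)^ξ_M = ∅`. -/
noncomputable def CBIndex (F : Set (Finset ℕ)) (M : Set ℕ) : Ordinal.{0} :=
  sInf {o : Ordinal.{0} | CBDeriv F M o = ∅}

/-- Fusion lemma: the inductive step of the Ramsey argument. -/
lemma fusion_aux (𝓛 : Set (Finset ℕ)) (M : Set ℕ) (hne : (∅ : Finset ℕ) ∉ 𝓛)
    (c : Finset ℕ → Bool) (N : Set ℕ) (hNM : N ⊆ M) (hNinf : N.Infinite)
    (H : ∀ m ∈ M, ∀ N', N' ⊆ M ∩ Set.Ioi m → N'.Infinite →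
      ∃ L, L ⊆ N' ∧ L.Infinite ∧ ∃ b : Bool,
        ∀ s ∈ famAt 𝓛 m, ↑s ⊆ L → c (insert m s) = b) :
    ∃ L, L ⊆ N ∧ L.Infinite ∧ ∃ b : Bool, ∀ s ∈ 𝓛, ↑s ⊆ L → c s = b := by
  classical
  -- one step of the fusion
  have stepE : ∀ N' : Set ℕ, ∃ S : Set ℕ, ∃ b : Bool, N' ⊆ N → N'.Infinite →
      S ⊆ N' ∩ Set.Ioi (sInf N') ∧ S.Infinite ∧
      ∀ s ∈ famAt 𝓛 (sInf N'), ↑s ⊆ S → c (insert (sInf N') s) = b := by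
    intro N'
    by_cases h1 : N' ⊆ N ∧ N'.Infinite
    · obtain ⟨hsub, hinf⟩ := h1
      set m := sInf N' with hm
      have hmN' : m ∈ N' := Nat.sInf_mem hinf.nonempty
      have hmM : m ∈ M := hNM (hsub hmN')
      have hsub2 : N' ∩ Set.Ioi m ⊆ M ∩ Set.Ioi m :=
        Set.inter_subset_inter_left _ (hsub.trans hNM)
      have hinf2 : (N' ∩ Set.Ioi m).Infinite := by
        have : N' \ Set.Iic m ⊆ N' ∩ Set.Ioi m := by
          intro x hx
          exact ⟨hx.1, by simpa using hx.2⟩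
        exact (hinf.diff (Set.finite_Iic m)).mono this
      obtain ⟨L, hL1, hL2, b, hb⟩ := H m hmM (N' ∩ Set.Ioi m) hsub2 hinf2
      exact ⟨L, b, fun _ _ => ⟨hL1, hL2, hb⟩⟩
    · exact ⟨∅, true, fun ha hb => absurd ⟨ha, hb⟩ h1⟩
  choose F bF hF using stepE
  set g : ℕ → Set ℕ := fun i => F^[i] N with hgdef
  have hgs : ∀ i, g (i + 1) = F (g i) := fun i => Function.iterate_succ_apply' F i N
  have hginv : ∀ i, g i ⊆ N ∧ (g i).Infinite := by
    intro i
    induction i with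
    | zero => exact ⟨subset_rfl, hNinf⟩
    | succ i ih =>
      have h := hF (g i) ih.1 ih.2
      rw [hgs]
      exact ⟨(h.1.trans Set.inter_subset_left).trans ih.1, h.2.1⟩
  set μ : ℕ → ℕ := fun i => sInf (g i) with hμdef
  have hstep : ∀ i, g (i + 1) ⊆ g i ∩ Set.Ioi (μ i) ∧ (g (i + 1)).Infinite ∧
      ∀ s ∈ famAt 𝓛 (μ i), ↑s ⊆ g (i + 1) → c (insert (μ i) s) = bF (g i) := by
    intro i
    rw [hgs]
    exact hF (g i) (hginv i).1 (hginv i).2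
  have hμmem : ∀ i, μ i ∈ g i := fun i => Nat.sInf_mem (hginv i).2.nonempty
  have hμmono : StrictMono μ := by
    apply strictMono_nat_of_lt_succ
    intro i
    have := (hstep i).1 (hμmem (i + 1))
    exact this.2
  have hchain : ∀ i j, i ≤ j → g j ⊆ g i := by
    intro i j hij
    induction j with
    | zero => simp_all
    | succ j ih =>
      rcases Nat.lt_or_ge i (j + 1) with h | h
      · exact ((hstep j).1.trans Set.inter_subset_left).trans (ih (Nat.lt_succ_iff.mp h))
      · have : i = j + 1 := le_antisymm hij h
        subst this; exact subset_rfl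
  -- pick the constant color
  have hcol : ∃ ε : Bool, {i : ℕ | bF (g i) = ε}.Infinite := by
    by_contra hcon
    push_neg at hcon
    have h1 := hcon true
    have h2 := hcon false
    have huniv : (Set.univ : Set ℕ) ⊆
        {i | bF (g i) = true} ∪ {i | bF (g i) = false} := by
      intro i _
      rcases Bool.eq_false_or_eq_true (bF (g i)) with h | h
      · exact Or.inl (by exact h)
      · exact Or.inr (by exact h)
    exact Set.infinite_univ (Set.Finite.subset (h1.union h2) huniv)
  obtain ⟨ε, hI⟩ := hcol
  refine ⟨μ '' {i : ℕ | bF (g i) = ε}, ?_, ?_, ε, ?_⟩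
  · rintro x ⟨i, _, rfl⟩
    exact (hginv i).1 (hμmem i)
  · exact hI.image (Set.injOn_of_injective hμmono.injective)
  · intro s hs hsL
    have hsne : s.Nonempty := by
      rcases Finset.eq_empty_or_nonempty s with rfl | h
      · exact absurd hs hne
      · exact h
    set x := s.min' hsne with hx
    have hxs : x ∈ s := s.min'_mem hsne
    obtain ⟨i, hiI, hix⟩ := hsL hxs
    set s' := s.erase x with hs'
    have hins : insert x s' = s := Finset.insert_erase hxs
    have hfam : s' ∈ famAt 𝓛 (μ i) := by
      constructor
      · rw [hix, hins]; exact hs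
      · intro a ha
        have haS : a ∈ s := Finset.mem_of_mem_erase ha
        have hane : a ≠ x := Finset.ne_of_mem_erase ha
        have := s.min'_le a haS
        rw [hix]
        omega
    have hsub' : ↑s' ⊆ g (i + 1) := by
      intro a ha
      have haS : a ∈ s := Finset.mem_of_mem_erase (by exact_mod_cast ha)
      obtain ⟨j, _, hja⟩ := hsL haS
      have hane : a ≠ x := Finset.ne_of_mem_erase (by exact_mod_cast ha)
      have hxa : x ≤ a := s.min'_le a haS
      have hlt : μ i < μ j := by rw [hix, hja]; omega
      have hij : i < j := hμmono.lt_iff_lt.mp hlt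
      rw [← hja]
      exact hchain (i + 1) j hij (hμmem j)
    have := (hstep i).2.2 s' hfam hsub'
    rw [hix, hins] at this
    rw [this]
    exact hiI

/-- The main combinatorial lemma, by induction on the ordinal. -/
lemma key_uniform : ∀ ξ : Ordinal.{0}, ∀ (𝓛 : Set (Finset ℕ)) (M : Set ℕ),
    IsUniform ξ 𝓛 M →
    ∀ (c : Finset ℕ → Bool) (N : Set ℕ), N ⊆ M → N.Infinite →
    ∃ L, L ⊆ N ∧ L.Infinite ∧ ∃ b : Bool, ∀ s ∈ 𝓛, ↑s ⊆ L → c s = b := by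
  intro ξ
  induction ξ using Ordinal.induction with
  | h ξ IH =>
    intro 𝓛 M hu
    cases hu with
    | zero M =>
      intro c N hNM hNinf
      refine ⟨N, subset_rfl, hNinf, c ∅, ?_⟩
      intro s hs _
      rw [Set.mem_singleton_iff] at hs
      subst hs; rfl
    | succ ζ 𝓛 M hsub hne h =>
      intro c N hNM hNinf
      refine fusion_aux 𝓛 M hne c N hNM hNinf ?_
      intro m hm N' hN' hinf
      have hζ : ζ < ζ + 1 := by
        rw [Ordinal.add_one_eq_succ]; exact Order.lt_succ ζ
      exact IH ζ hζ (famAt 𝓛 m) (M ∩ Set.Ioi m) (h m hm)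
        (fun s => c (insert m s)) N' hN' hinf
    | limit ξ 𝓛 M hlim hsub hne ξm hmono hlt hsup h =>
      intro c N hNM hNinf
      refine fusion_aux 𝓛 M hne c N hNM hNinf ?_
      intro m hm N' hN' hinf
      exact IH (ξm m) (hlt m hm) (famAt 𝓛 m) (M ∩ Set.Ioi m) (h m hm)
        (fun s => c (insert m s)) N' hN' hinf

/-- **Theorem 2.2.** If `{P₁, P₂}` is a partition of `[M]^{<ω}` and `ℒ` is a
`ξ`-uniform family on the infinite set `M`, then there is an infinite `L ⊆ M`
with `ℒ ∩ [L]^{<ω} ⊆ P₁` or `ℒ ∩ [L]^{<ω} ⊆ P₂`. -/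
theorem ramsey_dichotomy_uniform (M : Set ℕ) (hM : M.Infinite)
    (P₁ P₂ : Set (Finset ℕ)) (hunion : P₁ ∪ P₂ = FinSubs M) (hdisj : P₁ ∩ P₂ = ∅)
    (ξ : Ordinal.{0}) (hξ : ξ.card ≤ Cardinal.aleph0)
    (𝓛 : Set (Finset ℕ)) (h𝓛 : IsUniform ξ 𝓛 M) :
    ∃ L : Set ℕ, L ⊆ M ∧ L.Infinite ∧
      (𝓛 ∩ FinSubs L ⊆ P₁ ∨ 𝓛 ∩ FinSubs L ⊆ P₂) := by
  classical
  obtain ⟨L, hLM, hLinf, b, hb⟩ := key_uniform ξ 𝓛 M h𝓛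
    (fun s => decide (s ∈ P₁)) M subset_rfl hM
  refine ⟨L, hLM, hLinf, ?_⟩
  cases b with
  | true =>
    left
    rintro s ⟨hs1, hs2⟩
    have := hb s hs1 hs2
    simpa using this
  | false =>
    right
    rintro s ⟨hs1, hs2⟩
    have h1 : s ∉ P₁ := by simpa using hb s hs1 hs2
    have h2 : s ∈ FinSubs M := fun a ha => hLM (hs2 ha)
    have h3 : s ∈ P₁ ∪ P₂ := hunion ▸ h2
    rcases h3 with h3 | h3
    · exact absurd h3 h1
    · exact h3
end

section
/- Let ξ be a countable ordinal, M an infinite subset of ℕ, and ℒ a ξ-uniform family on M. For every infinite subset N of M and every partition {P₁, …, P_k} of [N]^{<ω} into finitely many parts, there exist an infinite subset L of N and an index i ∈ {1, …, k} such that ℒ ∩ [L]^{<ω} ⊆ P_i. -/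
open Ordinal Filter Set

private lemma dich_step (ξ : Ordinal.{0}) (𝓛 : Set (Finset ℕ)) (M : Set ℕ)
    (hne : (∅ : Finset ℕ) ∉ 𝓛)
    (key : ∀ m ∈ M, ∃ ζ, ζ < ξ ∧ IsUniform ζ (famAt 𝓛 m) (M ∩ Set.Ioi m))
    (IH : ∀ ζ < ξ, ∀ (𝓛' : Set (Finset ℕ)) (M' : Set ℕ), IsUniform ζ 𝓛' M' →
      ∀ N ⊆ M', N.Infinite → ∀ S : Set (Finset ℕ),
      ∃ L, L ⊆ N ∧ L.Infinite ∧ ((𝓛' ∩ FinSubs L ⊆ S) ∨ (𝓛' ∩ FinSubs L ⊆ Sᶜ)))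
    (N : Set ℕ) (hNM : N ⊆ M) (hN : N.Infinite) (S : Set (Finset ℕ)) :
    ∃ L, L ⊆ N ∧ L.Infinite ∧ ((𝓛 ∩ FinSubs L ⊆ S) ∨ (𝓛 ∩ FinSubs L ⊆ Sᶜ)) := by
  classical
  have step : ∀ A : Set ℕ, A ⊆ N → A.Infinite →
      ∃ B : Set ℕ, B ⊆ A ∩ Set.Ioi (sInf A) ∧ B.Infinite ∧
        ((famAt 𝓛 (sInf A) ∩ FinSubs B ⊆ {s | insert (sInf A) s ∈ S}) ∨
         (famAt 𝓛 (sInf A) ∩ FinSubs B ⊆ {s | insert (sInf A) s ∈ S}ᶜ)) := by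
    intro A hAN hA
    have hmA : sInf A ∈ A := Nat.sInf_mem hA.nonempty
    obtain ⟨ζ, hζ, hu⟩ := key (sInf A) (hNM (hAN hmA))
    have h1 : A ∩ Set.Ioi (sInf A) ⊆ M ∩ Set.Ioi (sInf A) :=
      Set.inter_subset_inter_left _ (fun x hx => hNM (hAN hx))
    have h2 : (A ∩ Set.Ioi (sInf A)).Infinite := by
      have he : A ∩ Set.Ioi (sInf A) = A \ Set.Iic (sInf A) := by
        ext x; simp [Set.mem_diff, not_le]
      rw [he]; exact hA.diff (Set.finite_Iic _)
    exact IH ζ hζ _ _ hu _ h1 h2 _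
  let T := {A : Set ℕ // A ⊆ N ∧ A.Infinite}
  let F : T → T := fun A =>
    ⟨(step A.1 A.2.1 A.2.2).choose, by
      have h := (step A.1 A.2.1 A.2.2).choose_spec
      exact ⟨(h.1.trans Set.inter_subset_left).trans A.2.1, h.2.1⟩⟩
  let seq : ℕ → T := fun n => F^[n] ⟨N, Set.Subset.rfl, hN⟩
  let A : ℕ → Set ℕ := fun n => (seq n).1
  let m : ℕ → ℕ := fun n => sInf (A n)
  have hseqN : ∀ n, A n ⊆ N ∧ (A n).Infinite := fun n => (seq n).2
  have hsucc : ∀ n, seq (n + 1) = F (seq n) := fun n => Function.iterate_succ_apply' F n _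
  have hspec : ∀ n, A (n + 1) ⊆ A n ∩ Set.Ioi (m n) ∧
      ((famAt 𝓛 (m n) ∩ FinSubs (A (n + 1)) ⊆ {s | insert (m n) s ∈ S}) ∨
       (famAt 𝓛 (m n) ∩ FinSubs (A (n + 1)) ⊆ {s | insert (m n) s ∈ S}ᶜ)) := by
    intro n
    have h := (step (A n) (hseqN n).1 (hseqN n).2).choose_spec
    have hA1 : A (n + 1) = (step (A n) (hseqN n).1 (hseqN n).2).choose := by
      show (seq (n + 1)).1 = _
      rw [hsucc n]
    rw [hA1]
    exact ⟨h.1, h.2.2⟩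
  have hmono : StrictMono m := by
    apply strictMono_nat_of_lt_succ
    intro n
    have h1 : m (n + 1) ∈ A (n + 1) := Nat.sInf_mem (hseqN (n + 1)).2.nonempty
    exact ((hspec n).1 h1).2
  have hanti : ∀ i j, i ≤ j → A j ⊆ A i := by
    intro i j hij
    induction j, hij using Nat.le_induction with
    | base => exact Set.Subset.rfl
    | succ j hij ih => exact ((hspec j).1.trans Set.inter_subset_left).trans ih
  have hmem : ∀ n, m n ∈ A n := fun n => Nat.sInf_mem (hseqN n).2.nonempty
  have main : ∀ (J : Set ℕ) (s : Finset ℕ), s ∈ 𝓛 → ↑s ⊆ m '' J →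
      ∃ n ∈ J, s.erase (m n) ∈ famAt 𝓛 (m n) ∩ FinSubs (A (n + 1)) ∧
        insert (m n) (s.erase (m n)) = s := by
    intro J s hs hsL
    have hsne : s.Nonempty := Finset.nonempty_iff_ne_empty.mpr (fun h => hne (h ▸ hs))
    obtain ⟨n, hn, hmn⟩ := hsL (Finset.mem_coe.mpr (s.min'_mem hsne))
    have hms : m n ∈ s := by rw [hmn]; exact s.min'_mem hsne
    have hgt : ∀ x ∈ s.erase (m n), m n < x := by
      intro x hx
      have hxs := Finset.mem_of_mem_erase hx
      have hne' := Finset.ne_of_mem_erase hx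
      have hle : s.min' hsne ≤ x := s.min'_le x hxs
      omega
    refine ⟨n, hn, ⟨⟨by rw [Finset.insert_erase hms]; exact hs, hgt⟩, ?_⟩,
      Finset.insert_erase hms⟩
    intro x hx
    have hx' : x ∈ s.erase (m n) := hx
    obtain ⟨n', _, hmn'⟩ := hsL (Finset.mem_coe.mpr (Finset.mem_of_mem_erase hx'))
    have hlt : m n < m n' := by rw [hmn']; exact hgt x hx'
    have hnn' : n + 1 ≤ n' := hmono.lt_iff_lt.mp hlt
    have : x ∈ A n' := by rw [← hmn']; exact hmem n'
    exact hanti (n + 1) n' hnn' this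
  have himg : ∀ J : Set ℕ, m '' J ⊆ N := by
    rintro J x ⟨n, -, rfl⟩
    exact (hseqN n).1 (hmem n)
  by_cases hJ : {n : ℕ | famAt 𝓛 (m n) ∩ FinSubs (A (n + 1)) ⊆ {s | insert (m n) s ∈ S}}.Infinite
  · refine ⟨m '' _, himg _, hJ.image (Set.injOn_of_injective hmono.injective), Or.inl ?_⟩
    rintro s ⟨hs, hsub⟩
    obtain ⟨n, hn, hmem', heq⟩ := main _ s hs hsub
    have := hn hmem'
    exact heq ▸ this
  · have hJc : {n : ℕ | ¬ (famAt 𝓛 (m n) ∩ FinSubs (A (n + 1)) ⊆ {s | insert (m n) s ∈ S})}.Infinite := by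
      rw [Set.not_infinite] at hJ
      have := hJ.infinite_compl
      simpa [Set.compl_setOf] using this
    refine ⟨m '' _, himg _, hJc.image (Set.injOn_of_injective hmono.injective), Or.inr ?_⟩
    rintro s ⟨hs, hsub⟩
    obtain ⟨n, hn, hmem', heq⟩ := main _ s hs hsub
    have hright := ((hspec n).2.resolve_left hn) hmem'
    intro hsS
    exact hright (by simp only [Set.mem_setOf_eq, heq]; exact hsS)

private theorem dich : ∀ ξ : Ordinal.{0}, ∀ (𝓛 : Set (Finset ℕ)) (M : Set ℕ), IsUniform ξ 𝓛 M →
    ∀ N ⊆ M, N.Infinite → ∀ S : Set (Finset ℕ),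
    ∃ L, L ⊆ N ∧ L.Infinite ∧ ((𝓛 ∩ FinSubs L ⊆ S) ∨ (𝓛 ∩ FinSubs L ⊆ Sᶜ)) := by
  intro ξ
  induction ξ using Ordinal.induction with
  | h ξ IH =>
    intro 𝓛 M hU N hNM hN S
    cases hU with
    | zero M =>
      by_cases h : (∅ : Finset ℕ) ∈ S
      · refine ⟨N, Set.Subset.rfl, hN, Or.inl ?_⟩
        rintro s ⟨hs1, -⟩
        rw [Set.mem_singleton_iff] at hs1
        rw [hs1]; exact h
      · refine ⟨N, Set.Subset.rfl, hN, Or.inr ?_⟩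
        rintro s ⟨hs1, -⟩
        rw [Set.mem_singleton_iff] at hs1
        rw [hs1]; exact h
    | succ ζ 𝓛x Mx hsub hnex hrec =>
      exact dich_step (ζ + 1) 𝓛 M hnex
        (fun m hm => ⟨ζ, by rw [Ordinal.add_one_eq_succ]; exact Order.lt_succ ζ, hrec m hm⟩)
        IH N hNM hN S
    | limit ξ' 𝓛x Mx hlim hsub hnex ξm hmono hlt hsup hrec =>
      exact dich_step ξ 𝓛 M hnex
        (fun m hm => ⟨ξm m, hlt m hm, hrec m hm⟩) IH N hNM hN S

private theorem multi (ξ : Ordinal.{0}) (𝓛 : Set (Finset ℕ)) (M : Set ℕ)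
    (hU : IsUniform ξ 𝓛 M) :
    ∀ (k : ℕ) (P : Fin (k + 1) → Set (Finset ℕ)) (N : Set ℕ), N ⊆ M → N.Infinite →
      (𝓛 ∩ FinSubs N ⊆ ⋃ i, P i) →
      ∃ (L : Set ℕ) (i : Fin (k + 1)), L ⊆ N ∧ L.Infinite ∧ 𝓛 ∩ FinSubs L ⊆ P i := by
  intro k
  induction k with
  | zero =>
    intro P N hNM hN hcov
    refine ⟨N, 0, Set.Subset.rfl, hN, fun s hs => ?_⟩
    obtain ⟨i, hi⟩ := Set.mem_iUnion.mp (hcov hs)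
    rwa [Fin.eq_zero i] at hi
  | succ k IHk =>
    intro P N hNM hN hcov
    obtain ⟨L, hLN, hL, hor⟩ := dich ξ 𝓛 M hU N hNM hN (P (Fin.last (k + 1)))
    cases hor with
    | inl h => exact ⟨L, Fin.last (k + 1), hLN, hL, h⟩
    | inr h =>
      have hcov' : 𝓛 ∩ FinSubs L ⊆ ⋃ i : Fin (k + 1), P (Fin.castSucc i) := by
        intro s hs
        have hs' : s ∈ 𝓛 ∩ FinSubs N := ⟨hs.1, fun x hx => hLN (hs.2 hx)⟩
        obtain ⟨i, hi⟩ := Set.mem_iUnion.mp (hcov hs')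
        have hnelast : i ≠ Fin.last (k + 1) := by
          rintro rfl; exact (h hs) hi
        obtain ⟨j, rfl⟩ := Fin.exists_castSucc_eq.mpr hnelast
        exact Set.mem_iUnion.mpr ⟨j, hi⟩
      obtain ⟨L', i, hL'L, hL', hsub⟩ :=
        IHk (fun i => P (Fin.castSucc i)) L (hLN.trans hNM) hL hcov'
      exact ⟨L', Fin.castSucc i, hL'L.trans hLN, hL', hsub⟩

/-- **Corollary 2.3.** For every `ξ`-uniform family `ℒ` on `M`, every infinite
`N ⊆ M` and every finite partition `{P₁, …, P_k}` of `[N]^{<ω}`, there are an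
infinite `L ⊆ N` and an index `i` with `ℒ ∩ [L]^{<ω} ⊆ P_i`. -/
theorem ramsey_finite_partition_uniform (ξ : Ordinal.{0}) (hξ : ξ.card ≤ Cardinal.aleph0)
    (M : Set ℕ) (hM : M.Infinite)
    (𝓛 : Set (Finset ℕ)) (h𝓛 : IsUniform ξ 𝓛 M)
    (N : Set ℕ) (hNM : N ⊆ M) (hN : N.Infinite)
    (k : ℕ) (hk : 0 < k) (P : Fin k → Set (Finset ℕ))
    (hunion : (⋃ i, P i) = FinSubs N)
    (hdisj : ∀ i j, i ≠ j → P i ∩ P j = ∅) :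
    ∃ (L : Set ℕ) (i : Fin k), L ⊆ N ∧ L.Infinite ∧ 𝓛 ∩ FinSubs L ⊆ P i := by
  obtain ⟨k', rfl⟩ : ∃ k', k = k' + 1 := ⟨k - 1, (Nat.succ_pred_eq_of_pos hk).symm⟩
  have hcov : 𝓛 ∩ FinSubs N ⊆ ⋃ i, P i := by
    intro s hs
    rw [hunion]
    exact hs.2
  obtain ⟨L, i, h1, h2, h3⟩ := multi ξ 𝓛 M h𝓛 k' P N hNM hN hcov
  exact ⟨L, i, h1, h2, h3⟩
end

section
/- Let ℱ be a family of finite subsets of ℕ, M an infinite subset of ℕ, ξ a countable ordinal, and ℒ a ξ-uniform family on M. If ℒ ∩ ℱ ∩ [L]^{<ω} ≠ ∅ for every infinite subset L of M, then for every infinite subset N of M there exists an infinite subset L of N such that ℒ ∩ [L]^{<ω} ⊆ ℱ. -/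
open Ordinal Filter Set

/-- Inversion for `IsUniform`: either rank 0 and `𝓛 = {∅}`, or `∅ ∉ 𝓛` and every
section `famAt 𝓛 m` is uniform of strictly smaller rank. -/
lemma uniform_cases {ξ : Ordinal.{0}} {𝓛 : Set (Finset ℕ)} {M : Set ℕ}
    (h : IsUniform ξ 𝓛 M) :
    𝓛 = {(∅ : Finset ℕ)} ∨
      ((∅ : Finset ℕ) ∉ 𝓛 ∧
        ∀ m ∈ M, ∃ ζ < ξ, IsUniform ζ (famAt 𝓛 m) (M ∩ Set.Ioi m)) := by
  cases h with
  | zero M => exact Or.inl rfl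
  | succ ζ L M hsub hne h =>
      refine Or.inr ⟨hne, fun m hm => ⟨ζ, ?_, h m hm⟩⟩
      rw [Ordinal.add_one_eq_succ]; exact Order.lt_succ ζ
  | limit ξ L M hlim hsub hne ξm hmono hlt hsup h =>
      exact Or.inr ⟨hne, fun m hm => ⟨ξm m, hlt m hm, h m hm⟩⟩

/-- Partition property of uniform families (Nash–Williams / Galvin for uniform
families): any subfamily `P` can be uniformized on an infinite subset. -/
lemma uniform_ramsey : ∀ ξ : Ordinal.{0}, ∀ 𝓛 : Set (Finset ℕ), ∀ M : Set ℕ,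
    IsUniform ξ 𝓛 M → ∀ P : Set (Finset ℕ), ∀ N : Set ℕ, N ⊆ M → N.Infinite →
      ∃ L : Set ℕ, L ⊆ N ∧ L.Infinite ∧
        ((𝓛 ∩ FinSubs L ⊆ P) ∨ (∀ s ∈ 𝓛 ∩ FinSubs L, s ∉ P)) := by
  intro ξ
  induction ξ using Ordinal.induction with
  | _ ξ ih =>
  intro 𝓛 M hU P N hNM hN
  rcases uniform_cases hU with h0 | ⟨hne, hfam⟩
  · subst h0
    by_cases hP : (∅ : Finset ℕ) ∈ P
    · refine ⟨N, subset_rfl, hN, Or.inl fun s hs => ?_⟩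
      rcases hs with ⟨hs1, _⟩
      simp only [Set.mem_singleton_iff] at hs1
      subst hs1; exact hP
    · refine ⟨N, subset_rfl, hN, Or.inr fun s hs => ?_⟩
      rcases hs with ⟨hs1, _⟩
      simp only [Set.mem_singleton_iff] at hs1
      subst hs1; exact hP
  · -- step: given an infinite `L₀ ⊆ M` with least element `m = sInf L₀`,
    -- uniformize the section `famAt 𝓛 m` inside `L₀ ∩ (m, ∞)`.
    have step : ∀ L₀ : Set ℕ, ∃ (L : Set ℕ) (c : Bool),
        L₀ ⊆ M → L₀.Infinite →
          L ⊆ L₀ ∩ Set.Ioi (sInf L₀) ∧ L.Infinite ∧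
          (c = true → famAt 𝓛 (sInf L₀) ∩ FinSubs L ⊆ famAt P (sInf L₀)) ∧
          (c = false →
            ∀ s ∈ famAt 𝓛 (sInf L₀) ∩ FinSubs L, s ∉ famAt P (sInf L₀)) := by
      intro L₀
      by_cases hc : L₀ ⊆ M ∧ L₀.Infinite
      · obtain ⟨hL₀M, hL₀⟩ := hc
        set m := sInf L₀ with hm
        have hmem : m ∈ L₀ := Nat.sInf_mem hL₀.nonempty
        obtain ⟨ζ, hζ, hUm⟩ := hfam m (hL₀M hmem)
        have hinf : (L₀ ∩ Set.Ioi m).Infinite := by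
          have he : L₀ \ Set.Iic m = L₀ ∩ Set.Ioi m := by
            ext x; simp [not_le]
          exact he ▸ hL₀.diff (Set.finite_Iic m)
        obtain ⟨L, hLsub, hLinf, hdich⟩ :=
          ih ζ hζ _ _ hUm (famAt P m) (L₀ ∩ Set.Ioi m)
            (Set.inter_subset_inter_left _ hL₀M) hinf
        rcases hdich with h1 | h2
        · exact ⟨L, true, fun _ _ => ⟨hLsub, hLinf, fun _ => h1, by simp⟩⟩
        · exact ⟨L, false, fun _ _ => ⟨hLsub, hLinf, by simp, fun _ => h2⟩⟩
      · exact ⟨∅, true, fun h1 h2 => absurd ⟨h1, h2⟩ hc⟩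
    choose nextL nextc hstep using step
    -- fusion sequence
    set A : ℕ → Set ℕ := fun n => nextL^[n] N with hA
    have hAsucc : ∀ n, A (n + 1) = nextL (A n) := fun n =>
      Function.iterate_succ_apply' nextL n N
    have hAinv : ∀ n, A n ⊆ N ∧ (A n).Infinite := by
      intro n; induction n with
      | zero => exact ⟨subset_rfl, hN⟩
      | succ k hk =>
        have h := hstep (A k) (hk.1.trans hNM) hk.2
        rw [← hAsucc k] at h
        exact ⟨(h.1.trans Set.inter_subset_left).trans hk.1, h.2.1⟩
    set mf : ℕ → ℕ := fun n => sInf (A n) with hmf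
    have hprop : ∀ n,
        A (n + 1) ⊆ A n ∩ Set.Ioi (mf n) ∧ (A (n + 1)).Infinite ∧
        (nextc (A n) = true →
          famAt 𝓛 (mf n) ∩ FinSubs (A (n + 1)) ⊆ famAt P (mf n)) ∧
        (nextc (A n) = false →
          ∀ s ∈ famAt 𝓛 (mf n) ∩ FinSubs (A (n + 1)), s ∉ famAt P (mf n)) := by
      intro n
      have h := hstep (A n) ((hAinv n).1.trans hNM) (hAinv n).2
      rw [← hAsucc n] at h
      exact h
    have hmmem : ∀ n, mf n ∈ A n := fun n => Nat.sInf_mem (hAinv n).2.nonempty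
    have hAstep : ∀ n, A (n + 1) ⊆ A n := fun n =>
      (hprop n).1.trans Set.inter_subset_left
    have hAmono : ∀ n j, n ≤ j → A j ⊆ A n := by
      intro n j hnj
      induction j with
      | zero => rw [Nat.le_zero.mp hnj]
      | succ k hk =>
        rcases Nat.lt_or_ge n (k + 1) with h | h
        · exact (hAstep k).trans (hk (Nat.lt_succ_iff.mp h))
        · rw [Nat.le_antisymm hnj h]
    have hmono : StrictMono mf := strictMono_nat_of_lt_succ fun n =>
      ((hprop n).1 (hmmem (n + 1))).2
    have hmemN : ∀ n, mf n ∈ N := fun n => (hAinv n).1 (hmmem n)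
    have hmA : ∀ n j, n ≤ j → mf j ∈ A n := fun n j hnj => hAmono n j hnj (hmmem j)
    -- pigeonhole on the colors
    have hIb : ∃ b : Bool, {n : ℕ | nextc (A n) = b}.Infinite := by
      by_contra h
      push_neg at h
      have huniv : (Set.univ : Set ℕ) ⊆
          {n | nextc (A n) = true} ∪ {n | nextc (A n) = false} := by
        intro n _; cases h' : nextc (A n) <;> simp [h']
      exact Set.infinite_univ (((h true).union (h false)).subset huniv)
    obtain ⟨b, hI⟩ := hIb
    set I : Set ℕ := {n | nextc (A n) = b} with hIdef
    refine ⟨mf '' I, ?_, hI.image hmono.injective.injOn, ?_⟩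
    · rintro _ ⟨n, _, rfl⟩; exact hmemN n
    · -- key decomposition of elements of `𝓛 ∩ [mf '' I]^{<ω}`
      have hkey : ∀ s ∈ 𝓛 ∩ FinSubs (mf '' I), ∃ n ∈ I,
          s.erase (mf n) ∈ famAt 𝓛 (mf n) ∩ FinSubs (A (n + 1)) ∧
          insert (mf n) (s.erase (mf n)) = s := by
        rintro s ⟨hs𝓛, hsL⟩
        have hsne : s.Nonempty := by
          rcases Finset.eq_empty_or_nonempty s with rfl | h
          · exact absurd hs𝓛 hne
          · exact h
        obtain ⟨n, hnI, ha⟩ := hsL (s.min'_mem hsne)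
        have hagt : ∀ x ∈ s.erase (mf n), mf n < x := by
          intro x hx
          have hxs := Finset.mem_of_mem_erase hx
          have hxa : x ≠ mf n := Finset.ne_of_mem_erase hx
          have := s.min'_le x hxs
          rw [← ha] at this
          exact lt_of_le_of_ne this (Ne.symm hxa)
        have herase : (↑(s.erase (mf n)) : Set ℕ) ⊆ A (n + 1) := by
          intro x hx
          obtain ⟨j, hjI, hjx⟩ := hsL (Finset.mem_of_mem_erase hx)
          have hlt : mf n < x := hagt x hx
          rw [← hjx] at hlt ⊢
          exact hmA (n + 1) j (hmono.lt_iff_lt.mp hlt)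
        refine ⟨n, hnI, ⟨⟨?_, hagt⟩, herase⟩, ?_⟩
        · rw [Finset.insert_erase (show mf n ∈ s by rw [ha]; exact s.min'_mem hsne)]; exact hs𝓛
        · exact Finset.insert_erase (show mf n ∈ s by rw [ha]; exact s.min'_mem hsne)
      cases b with
      | true =>
        refine Or.inl fun s hs => ?_
        obtain ⟨n, hnI, hmemfam, hins⟩ := hkey s hs
        have := ((hprop n).2.2.1 hnI) hmemfam
        rw [← hins]; exact this.1
      | false =>
        refine Or.inr fun s hs hsP => ?_
        obtain ⟨n, hnI, hmemfam, hins⟩ := hkey s hs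
        refine ((hprop n).2.2.2 hnI) _ hmemfam ⟨?_, hmemfam.1.2⟩
        rw [hins]; exact hsP

/-- **Corollary 2.4.** If `ℒ` is a `ξ`-uniform family on `M` and
`ℒ ∩ ℱ ∩ [L]^{<ω} ≠ ∅` for every infinite `L ⊆ M`, then for every infinite
`N ⊆ M` there is an infinite `L ⊆ N` with `ℒ ∩ [L]^{<ω} ⊆ ℱ`. -/
theorem uniform_subfamily_of_hitting (F : Set (Finset ℕ)) (M : Set ℕ) (hM : M.Infinite)
    (ξ : Ordinal.{0}) (hξ : ξ.card ≤ Cardinal.aleph0)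
    (𝓛 : Set (Finset ℕ)) (h𝓛 : IsUniform ξ 𝓛 M)
    (hhit : ∀ L : Set ℕ, L ⊆ M → L.Infinite → (𝓛 ∩ F ∩ FinSubs L).Nonempty) :
    ∀ N : Set ℕ, N ⊆ M → N.Infinite →
      ∃ L : Set ℕ, L ⊆ N ∧ L.Infinite ∧ 𝓛 ∩ FinSubs L ⊆ F := by
  intro N hNM hN
  obtain ⟨L, hLN, hLinf, hL⟩ := uniform_ramsey ξ 𝓛 M h𝓛 F N hNM hN
  rcases hL with h | h
  · exact ⟨L, hLN, hLinf, h⟩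
  · obtain ⟨s, ⟨hs𝓛, hsF⟩, hsL⟩ := hhit L (hLN.trans hNM) hLinf
    exact absurd hsF (h s ⟨hs𝓛, hsL⟩)
end

section
/- Let ξ be a countable ordinal with ξ ≥ 1, M an infinite subset of ℕ, and ℒ a ξ-uniform family on M. Then there exists an infinite subset L of M such that ℒ ∩ [L]^{<ω} is Sperner. -/
open Ordinal Filter Set

theorem nw_fusion (𝓛 : Set (Finset ℕ)) (M : Set ℕ) (hne : (∅ : Finset ℕ) ∉ 𝓛)
    (IH : ∀ m ∈ M, ∀ N ⊆ M ∩ Set.Ioi m, N.Infinite → ∀ c : Finset ℕ → Bool,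
      ∃ N' ⊆ N, N'.Infinite ∧ ∃ b, ∀ s ∈ famAt 𝓛 m, ↑s ⊆ N' → c s = b)
    (N : Set ℕ) (hNM : N ⊆ M) (hN : N.Infinite) (c : Finset ℕ → Bool) :
    ∃ N' ⊆ N, N'.Infinite ∧ ∃ b, ∀ s ∈ 𝓛, ↑s ⊆ N' → c s = b := by
  have key : ∀ S : Set ℕ, S ⊆ N → S.Infinite →
      ∃ p : Set ℕ × Bool, p.1 ⊆ S ∩ Set.Ioi (sInf S) ∧ p.1.Infinite ∧
        ∀ s ∈ famAt 𝓛 (sInf S), ↑s ⊆ p.1 → c (insert (sInf S) s) = p.2 := by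
    intro S hSN hS
    have hmem : sInf S ∈ S := Nat.sInf_mem hS.nonempty
    have hinf : (S ∩ Set.Ioi (sInf S)).Infinite := by
      have := hS.diff (Set.finite_Iic (sInf S))
      rwa [Set.diff_eq, Set.compl_Iic] at this
    obtain ⟨N', hN'sub, hN'inf, b, hb⟩ :=
      IH (sInf S) (hNM (hSN hmem)) (S ∩ Set.Ioi (sInf S))
        (fun x hx => ⟨hNM (hSN hx.1), hx.2⟩) hinf
        (fun s => c (insert (sInf S) s))
    exact ⟨(N', b), hN'sub, hN'inf, hb⟩
  choose F hF1 hF2 hF3 using key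
  let seq : ℕ → {S : Set ℕ // S ⊆ N ∧ S.Infinite} := fun k =>
    Nat.rec (motive := fun _ => {S : Set ℕ // S ⊆ N ∧ S.Infinite})
      ⟨N, subset_rfl, hN⟩
      (fun _ p => ⟨(F p.1 p.2.1 p.2.2).1,
        fun x hx => p.2.1 (hF1 p.1 p.2.1 p.2.2 hx).1,
        hF2 p.1 p.2.1 p.2.2⟩) k
  set n : ℕ → ℕ := fun k => sInf (seq k).1 with hn
  have hnk_mem : ∀ k, n k ∈ (seq k).1 := fun k => Nat.sInf_mem (seq k).2.2.nonempty
  have hstep : ∀ k, (seq (k+1)).1 ⊆ (seq k).1 ∩ Set.Ioi (n k) := fun k =>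
    hF1 (seq k).1 (seq k).2.1 (seq k).2.2
  have hanti : Antitone (fun k => (seq k).1) :=
    antitone_nat_of_succ_le (fun k x hx => (hstep k hx).1)
  have hnmono : StrictMono n :=
    strictMono_nat_of_lt_succ (fun k => (hstep k (hnk_mem (k+1))).2)
  set bk : ℕ → Bool := fun k => (F (seq k).1 (seq k).2.1 (seq k).2.2).2 with hbk
  obtain ⟨b, K, hKinf, hK⟩ : ∃ b, ∃ K : Set ℕ, K.Infinite ∧ ∀ k ∈ K, bk k = b := by
    rcases Set.finite_or_infinite {k | bk k = true} with hfin | hinf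
    · refine ⟨false, {k | bk k = true}ᶜ, hfin.infinite_compl, fun k hk => ?_⟩
      simpa using hk
    · exact ⟨true, _, hinf, fun k hk => hk⟩
  refine ⟨n '' K, ?_, hKinf.image (hnmono.injective.injOn), b, ?_⟩
  · rintro x ⟨k, _, rfl⟩; exact (seq k).2.1 (hnk_mem k)
  · intro s hs hsN'
    have hsne : s.Nonempty := by
      rcases Finset.eq_empty_or_nonempty s with rfl | h
      · exact absurd hs hne
      · exact h
    obtain ⟨k, hkK, hkm⟩ : ∃ k ∈ K, n k = s.min' hsne := hsN' (s.min'_mem hsne)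
    set t : Finset ℕ := s.erase (s.min' hsne) with ht
    have hins : insert (n k) t = s := by rw [hkm]; exact Finset.insert_erase (s.min'_mem hsne)
    have htfam : t ∈ famAt 𝓛 (n k) := by
      constructor
      · rw [hins]; exact hs
      · intro a ha
        rw [hkm]
        exact lt_of_le_of_ne (s.min'_le a (Finset.mem_of_mem_erase ha))
          (Ne.symm (Finset.ne_of_mem_erase ha))
    have htsub : ↑t ⊆ (seq (k+1)).1 := by
      intro a ha
      obtain ⟨j, hjK, rfl⟩ := hsN' (Finset.mem_of_mem_erase ha)
      have : n k < n j := htfam.2 _ ha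
      have hkj : k + 1 ≤ j := hnmono.lt_iff_lt.mp this
      exact hanti hkj (hnk_mem j)
    have := hF3 (seq k).1 (seq k).2.1 (seq k).2.2 t htfam htsub
    rw [hins] at this
    rw [this]
    exact hK k hkK

theorem nw {ξ : Ordinal.{0}} {𝓛 : Set (Finset ℕ)} {M : Set ℕ}
    (h : IsUniform ξ 𝓛 M) :
    ∀ N ⊆ M, N.Infinite → ∀ c : Finset ℕ → Bool,
      ∃ N' ⊆ N, N'.Infinite ∧ ∃ b, ∀ s ∈ 𝓛, ↑s ⊆ N' → c s = b := by
  induction h with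
  | zero M =>
      intro N hNM hN c
      refine ⟨N, subset_rfl, hN, c ∅, fun s hs _ => ?_⟩
      rw [Set.mem_singleton_iff] at hs; rw [hs]
  | succ ζ L M hsub hne h ih =>
      exact fun N hNM hN c => nw_fusion L M hne ih N hNM hN c
  | limit ξ L M hlim hsub hne ξm hmono hlt hsup h ih =>
      exact fun N hNM hN c => nw_fusion L M hne ih N hNM hN c

/-- **Corollary 2.5.** If `1 ≤ ξ` and `ℒ` is a `ξ`-uniform family on the
infinite set `M`, then there is an infinite `L ⊆ M` such that `ℒ ∩ [L]^{<ω}`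
is Sperner. -/
theorem exists_sperner_restriction (ξ : Ordinal.{0}) (hξ1 : 1 ≤ ξ)
    (hξ : ξ.card ≤ Cardinal.aleph0)
    (M : Set ℕ) (hM : M.Infinite)
    (𝓛 : Set (Finset ℕ)) (h𝓛 : IsUniform ξ 𝓛 M) :
    ∃ L : Set ℕ, L ⊆ M ∧ L.Infinite ∧ Sperner (𝓛 ∩ FinSubs L) := by
  classical
  have hne : (∅ : Finset ℕ) ∉ 𝓛 := by
    cases h𝓛 with
    | zero _ => exact absurd hξ1 (by simp)
    | succ ζ L M hsub hne h => exact hne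
    | limit ξ L M hlim hsub hne ξm hmono hlt hsup h => exact hne
  obtain ⟨L, hLM, hLinf, b, hb⟩ :=
    nw h𝓛 M subset_rfl hM (fun s => decide (∃ t ∈ 𝓛, t ⊂ s))
  refine ⟨L, hLM, hLinf, ?_⟩
  cases b with
  | false =>
      rintro ⟨s, ⟨hs𝓛, hsL⟩, t, ⟨ht𝓛, htL⟩, hst⟩
      have := hb t ht𝓛 htL
      exact of_decide_eq_false this ⟨s, hs𝓛, hst⟩
  | true =>
      have hempty : ∀ nn : ℕ, ∀ s ∈ 𝓛, ↑s ⊆ L → s.card ≤ nn → False := by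
        intro nn
        induction nn with
        | zero =>
            intro s hs hsL hc
            have : s = ∅ := Finset.card_eq_zero.mp (Nat.le_zero.mp hc)
            rw [this] at hs; exact hne hs
        | succ nn ihn =>
            intro s hs hsL hc
            obtain ⟨t, ht, hts⟩ := of_decide_eq_true (hb s hs hsL)
            exact ihn t ht (fun x hx => hsL (hts.1 hx))
              (by have := Finset.card_lt_card hts; omega)
      rintro ⟨s, ⟨hs, hsL⟩, _⟩
      exact hempty s.card s hs hsL le_rfl
end

section
/- Let M be an infinite subset of ℕ and ℒ a ξ-uniform family on M for some countable ordinal ξ. For every finite non-empty subset A of M, exactly one of the following holds: (i) there exists s ∈ ℒ such that A is a proper initial segment of s; (ii) there exists s ∈ ℒ such that s is an initial segment of A. -/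
open Ordinal Filter Set

lemma inter_Ioi_infinite {M : Set ℕ} (hM : M.Infinite) (m : ℕ) :
    (M ∩ Set.Ioi m).Infinite := by
  apply (hM.diff (Set.finite_Iic m)).mono
  rintro x ⟨hx, hx2⟩
  exact ⟨hx, by simpa using hx2⟩

lemma uniform_nonempty {ξ : Ordinal.{0}} {L : Set (Finset ℕ)} {M : Set ℕ}
    (h : IsUniform ξ L M) (hM : M.Infinite) : L.Nonempty := by
  induction h with
  | zero M => exact ⟨∅, rfl⟩
  | succ ζ L M hsub hne h ih =>
      obtain ⟨m, hm⟩ := hM.nonempty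
      obtain ⟨s, hs, _⟩ := ih m hm (inter_Ioi_infinite hM m)
      exact ⟨insert m s, hs⟩
  | limit ξ L M hlim hsub hne ξm hmono hlt hsup h ih =>
      obtain ⟨m, hm⟩ := hM.nonempty
      obtain ⟨s, hs, _⟩ := ih m hm (inter_Ioi_infinite hM m)
      exact ⟨insert m s, hs⟩

/-- The inductive step of the dichotomy, factored out. -/
lemma dichotomy_step (L : Set (Finset ℕ)) (M : Set ℕ)
    (hLne : L.Nonempty) (hne : (∅ : Finset ℕ) ∉ L)
    (ih : ∀ m ∈ M, ∀ A : Finset ℕ, ↑A ⊆ M ∩ Set.Ioi m →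
      Xor' (∃ s ∈ famAt L m, PInitSeg A s) (∃ s ∈ famAt L m, InitSeg s A))
    (A : Finset ℕ) (hAM : ↑A ⊆ M) :
    Xor' (∃ s ∈ L, PInitSeg A s) (∃ s ∈ L, InitSeg s A) := by
  rcases A.eq_empty_or_nonempty with rfl | hA
  · left
    constructor
    · obtain ⟨s, hs⟩ := hLne
      refine ⟨s, hs, ⟨⟨Finset.empty_subset s, by simp⟩, ?_⟩⟩
      rintro rfl; exact hne hs
    · rintro ⟨s, hs, hsub, _⟩
      rw [Finset.subset_empty.mp hsub] at hs
      exact hne hs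
  · set m := A.min' hA with hm_def
    have hmA : m ∈ A := A.min'_mem hA
    have hmM : m ∈ M := hAM hmA
    have hmin : ∀ a ∈ A, m ≤ a := fun a ha => A.min'_le a ha
    set A' := A.erase m with hA'_def
    have hA'sub : ↑A' ⊆ M ∩ Set.Ioi m := by
      intro a ha
      rw [Finset.coe_erase] at ha
      obtain ⟨haA, hane⟩ := ha
      rw [Set.mem_singleton_iff] at hane
      exact ⟨hAM haA, lt_of_le_of_ne (hmin a haA) (Ne.symm hane)⟩
    have hAins : insert m A' = A := Finset.insert_erase hmA
    have key := ih m hmM A' hA'sub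
    have e1 : (∃ s ∈ L, PInitSeg A s) ↔ (∃ s ∈ famAt L m, PInitSeg A' s) := by
      constructor
      · rintro ⟨s, hs, ⟨⟨hsub, hinit⟩, hne'⟩⟩
        have hms : m ∈ s := hsub hmA
        have hgt : ∀ a ∈ s.erase m, m < a := by
          intro a ha
          obtain ⟨hanem, has⟩ := Finset.mem_erase.mp ha
          by_contra hle
          push_neg at hle
          exact hanem (le_antisymm hle (hmin a (hinit a has m hmA hle)))
        refine ⟨s.erase m, ⟨by rw [Finset.insert_erase hms]; exact hs, hgt⟩, ⟨⟨?_, ?_⟩, ?_⟩⟩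
        · intro a ha
          obtain ⟨hanem, haA⟩ := Finset.mem_erase.mp ha
          exact Finset.mem_erase.mpr ⟨hanem, hsub haA⟩
        · intro a ha b hb hab
          obtain ⟨hanem, has⟩ := Finset.mem_erase.mp ha
          obtain ⟨_, hbA⟩ := Finset.mem_erase.mp hb
          exact Finset.mem_erase.mpr ⟨hanem, hinit a has b hbA hab⟩
        · intro hEq
          apply hne'
          rw [← hAins, hEq, Finset.insert_erase hms]
      · rintro ⟨s', ⟨hins, hgt⟩, ⟨⟨hsub, hinit⟩, hne'⟩⟩
        refine ⟨insert m s', hins, ⟨⟨?_, ?_⟩, ?_⟩⟩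
        · intro a ha
          rcases Finset.mem_insert.mp (hAins ▸ Finset.mem_coe.mp ha : a ∈ insert m A') with rfl | haA'
          · exact Finset.mem_insert_self _ _
          · exact Finset.mem_insert_of_mem (hsub haA')
        · intro a ha b hb hab
          rcases Finset.mem_insert.mp ha with rfl | has'
          · exact hmA
          · have hma : m < a := hgt a has'
            have hbA' : b ∈ A' := by
              refine Finset.mem_erase.mpr ⟨?_, hb⟩
              rintro rfl
              exact absurd hab (not_le.mpr hma)
            have := hinit a has' b hbA' hab
            exact Finset.mem_of_mem_erase this
        · intro hEq
          apply hne'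
          have hmns' : m ∉ s' := fun h => lt_irrefl m (hgt m h)
          rw [hA'_def, hEq, Finset.erase_insert hmns']
    have e2 : (∃ s ∈ L, InitSeg s A) ↔ (∃ s ∈ famAt L m, InitSeg s A') := by
      constructor
      · rintro ⟨s, hs, ⟨hsub, hinit⟩⟩
        have hsne : s.Nonempty := by
          rcases s.eq_empty_or_nonempty with rfl | h
          · exact absurd hs hne
          · exact h
        obtain ⟨b, hb⟩ := hsne
        have hms : m ∈ s := hinit m hmA b hb (hmin b (hsub hb))
        have hgt : ∀ a ∈ s.erase m, m < a := by
          intro a ha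
          obtain ⟨hanem, has⟩ := Finset.mem_erase.mp ha
          exact lt_of_le_of_ne (hmin a (hsub has)) (Ne.symm hanem)
        refine ⟨s.erase m, ⟨by rw [Finset.insert_erase hms]; exact hs, hgt⟩, ⟨?_, ?_⟩⟩
        · intro a ha
          obtain ⟨hanem, has⟩ := Finset.mem_erase.mp ha
          exact Finset.mem_erase.mpr ⟨hanem, hsub has⟩
        · intro a ha b hb' hab
          obtain ⟨hanem, haA⟩ := Finset.mem_erase.mp ha
          obtain ⟨_, hbs⟩ := Finset.mem_erase.mp hb'
          exact Finset.mem_erase.mpr ⟨hanem, hinit a haA b hbs hab⟩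
      · rintro ⟨s', ⟨hins, hgt⟩, ⟨hsub, hinit⟩⟩
        refine ⟨insert m s', hins, ⟨?_, ?_⟩⟩
        · intro a ha
          rcases Finset.mem_insert.mp ha with rfl | has'
          · exact hmA
          · exact Finset.mem_of_mem_erase (hsub has')
        · intro a ha b hb hab
          rcases eq_or_ne a m with rfl | hanem
          · exact Finset.mem_insert_self _ _
          · have haA' : a ∈ A' := Finset.mem_erase.mpr ⟨hanem, ha⟩
            rcases Finset.mem_insert.mp hb with rfl | hbs'
            · exact absurd (le_antisymm hab (hmin a ha)) hanem
            · exact Finset.mem_insert_of_mem (hinit a haA' b hbs' hab)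
    rcases key with ⟨h1, h2⟩ | ⟨h1, h2⟩
    · exact Or.inl ⟨e1.mpr h1, fun h => h2 (e2.mp h)⟩
    · exact Or.inr ⟨e2.mpr h1, fun h => h2 (e1.mp h)⟩

lemma dichotomy_aux {ξ : Ordinal.{0}} {L : Set (Finset ℕ)} {M : Set ℕ}
    (h : IsUniform ξ L M) (hM : M.Infinite) (A : Finset ℕ) (hAM : ↑A ⊆ M) :
    Xor' (∃ s ∈ L, PInitSeg A s) (∃ s ∈ L, InitSeg s A) := by
  induction h generalizing A with
  | zero M =>
      right
      constructor
      · exact ⟨∅, rfl, Finset.empty_subset A, by simp⟩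
      · rintro ⟨s, hs, ⟨⟨hsub, _⟩, hne'⟩⟩
        rw [Set.mem_singleton_iff.mp hs] at hsub hne'
        exact hne' (le_antisymm hsub (Finset.empty_subset A))
  | succ ζ L M hsub hne h ih =>
      exact dichotomy_step L M
        (uniform_nonempty (IsUniform.succ ζ L M hsub hne h) hM) hne
        (fun m hm A' hA' => ih m hm (inter_Ioi_infinite hM m) A' hA') A hAM
  | limit ξ L M hlim hsub hne ξm hmono hlt hsup h ih =>
      exact dichotomy_step L M
        (uniform_nonempty (IsUniform.limit ξ L M hlim hsub hne ξm hmono hlt hsup h) hM) hne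
        (fun m hm A' hA' => ih m hm (inter_Ioi_infinite hM m) A' hA') A hAM

/-- **Corollary 2.9.** If `ℒ` is a `ξ`-uniform family on `M` then for every
non-empty finite `A ⊆ M` exactly one of the following holds: either `A` is a
proper initial segment of some `s ∈ ℒ`, or some `s ∈ ℒ` is an initial segment
of `A`. -/
theorem initial_segment_dichotomy (M : Set ℕ) (hM : M.Infinite)
    (ξ : Ordinal.{0}) (hξ : ξ.card ≤ Cardinal.aleph0)
    (𝓛 : Set (Finset ℕ)) (h𝓛 : IsUniform ξ 𝓛 M)
    (A : Finset ℕ) (hA : A.Nonempty) (hAM : ↑A ⊆ M) :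
    Xor' (∃ s ∈ 𝓛, PInitSeg A s) (∃ s ∈ 𝓛, InitSeg s A) := by
  exact dichotomy_aux h𝓛 hM A hAM
end

section
/- Let M be an infinite subset of ℕ and ℒ a Sperner family on M that is ξ-uniform on M for some countable ordinal ξ. Then: (i) ℒ* = ℒ_*; and (ii) for every infinite subset L of M, ℒ* ∩ [L]^{<ω} = (ℒ ∩ [L]^{<ω})* and ℒ_* ∩ [L]^{<ω} = (ℒ ∩ [L]^{<ω})_*. -/
open Ordinal Filter Set

/-- `s` is an initial segment of the (possibly infinite) set `N`. -/
def InitSegSet (s : Finset ℕ) (N : Set ℕ) : Prop :=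
  ↑s ⊆ N ∧ ∀ a ∈ N, ∀ b ∈ s, a ≤ b → a ∈ s

lemma uniform_subsets {ξ : Ordinal.{0}} {L : Set (Finset ℕ)} {M : Set ℕ}
    (h : IsUniform ξ L M) : L ⊆ FinSubs M := by
  cases h with
  | zero M =>
      intro s hs
      simp only [Set.mem_singleton_iff] at hs
      subst hs
      intro a ha
      simp at ha
  | succ ζ L M hsub hne h => exact hsub
  | limit ξ L M hlim hsub hne ξm hmono hlt hsup h => exact hsub

lemma exists_initSegSet {ξ : Ordinal.{0}} {L : Set (Finset ℕ)} {M : Set ℕ}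
    (h : IsUniform ξ L M) :
    ∀ N : Set ℕ, N ⊆ M → N.Infinite → ∃ s ∈ L, InitSegSet s N := by
  induction h with
  | zero M =>
      intro N _ _
      exact ⟨∅, rfl, by simp [InitSegSet], by simp⟩
  | succ ζ L M hsub hne h ih =>
      intro N hNM hN
      set m := sInf N with hm
      have hmN : m ∈ N := Nat.sInf_mem hN.nonempty
      have hNe : N ∩ Set.Ioi m = N \ Set.Iic m := by
        ext a; simp [not_le]
      have hN' : (N ∩ Set.Ioi m).Infinite := hNe ▸ hN.diff (Set.finite_Iic m)
      obtain ⟨s', hs'L, hs'sub, hs'init⟩ :=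
        ih m (hNM hmN) (N ∩ Set.Ioi m)
          (fun a ha => ⟨hNM ha.1, ha.2⟩) hN'
      refine ⟨insert m s', hs'L.1, ?_, ?_⟩
      · intro a ha
        simp only [Finset.coe_insert, Set.mem_insert_iff] at ha
        rcases ha with rfl | ha
        · exact hmN
        · exact (hs'sub ha).1
      · intro a haN b hb hab
        by_cases hma : a = m
        · simp [hma]
        · have hma' : m < a := lt_of_le_of_ne (Nat.sInf_le haN) (Ne.symm hma)
          rcases Finset.mem_insert.mp hb with rfl | hb
          · exact absurd hab (not_le.mpr hma')
          · exact Finset.mem_insert_of_mem (hs'init a ⟨haN, hma'⟩ b hb hab)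
  | limit ξ L M hlim hsub hne ξm hmono hlt hsup h ih =>
      intro N hNM hN
      set m := sInf N with hm
      have hmN : m ∈ N := Nat.sInf_mem hN.nonempty
      have hNe : N ∩ Set.Ioi m = N \ Set.Iic m := by
        ext a; simp [not_le]
      have hN' : (N ∩ Set.Ioi m).Infinite := hNe ▸ hN.diff (Set.finite_Iic m)
      obtain ⟨s', hs'L, hs'sub, hs'init⟩ :=
        ih m (hNM hmN) (N ∩ Set.Ioi m)
          (fun a ha => ⟨hNM ha.1, ha.2⟩) hN'
      refine ⟨insert m s', hs'L.1, ?_, ?_⟩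
      · intro a ha
        simp only [Finset.coe_insert, Set.mem_insert_iff] at ha
        rcases ha with rfl | ha
        · exact hmN
        · exact (hs'sub ha).1
      · intro a haN b hb hab
        by_cases hma : a = m
        · simp [hma]
        · have hma' : m < a := lt_of_le_of_ne (Nat.sInf_le haN) (Ne.symm hma)
          rcases Finset.mem_insert.mp hb with rfl | hb
          · exact absurd hab (not_le.mpr hma')
          · exact Finset.mem_insert_of_mem (hs'init a ⟨haN, hma'⟩ b hb hab)

lemma initSegSet_comp {s t : Finset ℕ} {N : Set ℕ}
    (hs : InitSegSet s N) (ht : InitSegSet t N) : InitSeg t s ∨ InitSeg s t := by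
  by_cases h : t ⊆ s
  · exact Or.inl ⟨h, fun a ha b hb hab => ht.2 a (hs.1 ha) b hb hab⟩
  · right
    have hst : s ⊆ t := by
      intro c hc
      obtain ⟨b, hbt, hbs⟩ := Finset.not_subset.mp h
      have hcb : c ≤ b := by
        by_contra hlt
        push_neg at hlt
        exact hbs (hs.2 b (ht.1 hbt) c hc hlt.le)
      exact ht.2 c (hs.1 hc) b hbt hcb
    exact ⟨hst, fun a ha b hb hab => hs.2 a (ht.1 ha) b hb hab⟩

lemma sperner_key {ξ : Ordinal.{0}} {𝓛 : Set (Finset ℕ)} {M : Set ℕ}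
    (hU : IsUniform ξ 𝓛 M) (hsp : Sperner 𝓛) {L : Set ℕ}
    (hLM : L ⊆ M) (hL : L.Infinite) {t s : Finset ℕ}
    (hs : s ∈ 𝓛) (hts : t ⊆ s) (htL : ↑t ⊆ L) :
    ∃ s' ∈ 𝓛, ↑s' ⊆ L ∧ InitSeg t s' := by
  set N : Set ℕ := ↑t ∪ {m ∈ L | ∀ b ∈ t, b < m} with hNdef
  have hNL : N ⊆ L := Set.union_subset htL (fun a ha => ha.1)
  have hNinf : N.Infinite := by
    refine Set.Infinite.mono ?_ (hL.diff (Set.finite_Iic (t.sup id)))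
    intro a ha
    refine Set.mem_union_right _ ⟨ha.1, fun b hb => ?_⟩
    have h1 : b ≤ t.sup id := Finset.le_sup (f := id) hb
    have h2 : t.sup id < a := not_le.mp ha.2
    omega
  have htN : InitSegSet t N := by
    refine ⟨Set.subset_union_left, fun a ha b hb hab => ?_⟩
    rcases ha with ha | ha
    · exact ha
    · exact absurd (ha.2 b hb) (not_lt.mpr hab)
  obtain ⟨s', hs'𝓛, hs'N⟩ := exists_initSegSet hU N (hNL.trans hLM) hNinf
  rcases initSegSet_comp hs'N htN with hcase | hcase
  · exact ⟨s', hs'𝓛, hs'N.1.trans hNL, hcase⟩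
  · have hsub : s' ⊆ s := hcase.1.trans hts
    have hss : s' = s := by
      by_contra hne
      exact hsp ⟨s', hs'𝓛, s, hs, ssubset_of_subset_of_ne hsub hne⟩
    have hts' : t = s' := by
      subst hss
      exact subset_antisymm hts hcase.1
    refine ⟨s', hs'𝓛, hs'N.1.trans hNL, ?_⟩
    rw [← hts']
    exact ⟨subset_rfl, fun a ha _ _ _ => ha⟩

/-- **Corollary 2.11.** For a Sperner `ξ`-uniform family `ℒ` on `M`:
(i) `ℒ* = ℒ_*`; (ii) for every infinite `L ⊆ M`,
`ℒ* ∩ [L]^{<ω} = (ℒ ∩ [L]^{<ω})*` and `ℒ_* ∩ [L]^{<ω} = (ℒ ∩ [L]^{<ω})_*`. -/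
theorem sperner_star_eq (M : Set ℕ) (hM : M.Infinite)
    (ξ : Ordinal.{0}) (hξ : ξ.card ≤ Cardinal.aleph0)
    (𝓛 : Set (Finset ℕ)) (h𝓛 : IsUniform ξ 𝓛 M) (hsp : Sperner 𝓛) :
    famStar 𝓛 = famSub 𝓛 ∧
    ∀ L : Set ℕ, L ⊆ M → L.Infinite →
      famStar 𝓛 ∩ FinSubs L = famStar (𝓛 ∩ FinSubs L) ∧
      famSub 𝓛 ∩ FinSubs L = famSub (𝓛 ∩ FinSubs L) := by
  constructor
  · apply Set.Subset.antisymm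
    · rintro t ⟨s, hs, hinit⟩
      exact ⟨s, hs, hinit.1⟩
    · rintro t ⟨s, hs, hts⟩
      have htM : ↑t ⊆ M := fun a ha => uniform_subsets h𝓛 hs (hts ha)
      obtain ⟨s', hs'𝓛, _, hinit⟩ :=
        sperner_key h𝓛 hsp (subset_refl M) hM hs hts htM
      exact ⟨s', hs'𝓛, hinit⟩
  · intro L hLM hL
    constructor
    · apply Set.Subset.antisymm
      · rintro t ⟨⟨s, hs, hinit⟩, htL⟩
        obtain ⟨s', hs'𝓛, hs'L, hinit'⟩ :=
          sperner_key h𝓛 hsp hLM hL hs hinit.1 htL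
        exact ⟨s', ⟨hs'𝓛, hs'L⟩, hinit'⟩
      · rintro t ⟨s, ⟨hs𝓛, hsL⟩, hinit⟩
        exact ⟨⟨s, hs𝓛, hinit⟩, fun a ha => hsL (hinit.1 ha)⟩
    · apply Set.Subset.antisymm
      · rintro t ⟨⟨s, hs, hts⟩, htL⟩
        obtain ⟨s', hs'𝓛, hs'L, hinit'⟩ :=
          sperner_key h𝓛 hsp hLM hL hs hts htL
        exact ⟨s', ⟨hs'𝓛, hs'L⟩, hinit'.1⟩
      · rintro t ⟨s, ⟨hs𝓛, hsL⟩, hts⟩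
        exact ⟨⟨s, hs𝓛, hts⟩, fun a ha => hsL (hts ha)⟩
end

section
/- Let M be an infinite subset of ℕ, let ξ₁ < ξ₂ be countable ordinals, let ℒ₁ be a ξ₁-uniform family on M and ℒ₂ a ξ₂-uniform family on M. Then there exists an infinite subset L of M such that ℒ₁ ∩ [L]^{<ω} ⊆ (ℒ₂)* \ ℒ₂. -/
open Ordinal Filter Set

/-! ### Auxiliary material for Corollary 2.13 -/

/-- Iterating `famAt` along a list. -/
def iterL : Set (Finset ℕ) → List ℕ → Set (Finset ℕ)
  | L, [] => L
  | L, m :: r => iterL (famAt L m) r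

/-- Iterating `famAt` along the increasing enumeration of a finite set. -/
def sFam (L : Set (Finset ℕ)) (s : Finset ℕ) : Set (Finset ℕ) :=
  iterL L (s.sort (· ≤ ·))

/-- The part of `M` above all elements of `s`. -/
def grd (M : Set ℕ) (s : Finset ℕ) : Set ℕ := {n | n ∈ M ∧ ∀ a ∈ s, a < n}

lemma mem_iterL {xs : List ℕ} (hxs : xs.Pairwise (· < ·)) {L : Set (Finset ℕ)}
    {u : Finset ℕ} :
    u ∈ iterL L xs ↔ (xs.toFinset ∪ u ∈ L ∧ ∀ a ∈ xs, ∀ b ∈ u, a < b) := by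
  induction xs generalizing L with
  | nil => simp [iterL]
  | cons m r ih =>
    have hmr : ∀ a ∈ r, m < a := fun a ha => (List.pairwise_cons.mp hxs).1 a ha
    rw [iterL, ih (List.pairwise_cons.mp hxs).2]
    constructor
    · rintro ⟨⟨h1, h2⟩, h3⟩
      refine ⟨?_, ?_⟩
      · simpa [Finset.insert_union] using h1
      · intro a ha b hb
        rcases List.mem_cons.mp ha with rfl | ha
        · exact h2 b (Finset.mem_union_right _ hb)
        · exact h3 a ha b hb
    · rintro ⟨h1, h2⟩
      refine ⟨⟨?_, ?_⟩, ?_⟩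
      · simpa [Finset.insert_union] using h1
      · intro x hx
        rcases Finset.mem_union.mp hx with hx | hx
        · exact hmr x (List.mem_toFinset.mp hx)
        · exact h2 m (List.mem_cons_self (a := m) (l := r)) x hx
      · intro a ha b hb
        exact h2 a (List.mem_cons_of_mem m ha) b hb

lemma mem_sFam {L : Set (Finset ℕ)} {s u : Finset ℕ} :
    u ∈ sFam L s ↔ (s ∪ u ∈ L ∧ ∀ a ∈ s, ∀ b ∈ u, a < b) := by
  rw [sFam, mem_iterL (Finset.sortedLT_sort s).pairwise]
  simp [Finset.sort_toFinset, Finset.mem_sort]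

lemma empty_mem_sFam {L : Set (Finset ℕ)} {s : Finset ℕ} :
    (∅ : Finset ℕ) ∈ sFam L s ↔ s ∈ L := by
  simp [mem_sFam]

lemma sFam_insert {L : Set (Finset ℕ)} {s : Finset ℕ} {ℓ : ℕ}
    (h : ∀ a ∈ s, a < ℓ) :
    sFam L (insert ℓ s) = famAt (sFam L s) ℓ := by
  ext u
  rw [mem_sFam]
  show _ ↔ insert ℓ u ∈ sFam L s ∧ ∀ b ∈ u, ℓ < b
  rw [mem_sFam]
  constructor
  · rintro ⟨h1, h2⟩
    have hu : ∀ b ∈ u, ℓ < b := fun b hb => h2 ℓ (Finset.mem_insert_self _ _) b hb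
    refine ⟨⟨?_, ?_⟩, hu⟩
    · have : s ∪ insert ℓ u = insert ℓ s ∪ u := by
        ext x
        simp only [Finset.mem_insert, Finset.mem_union]
        tauto
      rw [this]; exact h1
    · intro a ha b hb
      rcases Finset.mem_insert.mp hb with rfl | hb
      · exact h a ha
      · exact h2 a (Finset.mem_insert_of_mem ha) b hb
  · rintro ⟨⟨h1, h2⟩, h3⟩
    refine ⟨?_, ?_⟩
    · have : insert ℓ s ∪ u = s ∪ insert ℓ u := by
        ext x
        simp only [Finset.mem_insert, Finset.mem_union]
        tauto
      rw [this]; exact h1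
    · intro a ha b hb
      rcases Finset.mem_insert.mp ha with rfl | ha
      · exact h3 b hb
      · exact (h a ha).trans (h3 b hb)

lemma grd_empty (M : Set ℕ) : grd M ∅ = M := by
  ext n; simp [grd]

lemma grd_insert (M : Set ℕ) (s : Finset ℕ) (ℓ : ℕ) :
    grd M (insert ℓ s) = grd M s ∩ Set.Ioi ℓ := by
  ext n
  simp only [grd, Set.mem_inter_iff, Set.mem_setOf_eq, Set.mem_Ioi,
    Finset.mem_insert]
  constructor
  · rintro ⟨h1, h2⟩
    exact ⟨⟨h1, fun a ha => h2 a (Or.inr ha)⟩, h2 ℓ (Or.inl rfl)⟩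
  · rintro ⟨⟨h1, h2⟩, h3⟩
    exact ⟨h1, fun a ha => ha.elim (fun h => h ▸ h3) (h2 a)⟩

lemma grd_infinite {M : Set ℕ} (hM : M.Infinite) (s : Finset ℕ) :
    (grd M s).Infinite := by
  refine (inter_Ioi_infinite hM (s.sup id)).mono ?_
  rintro n ⟨hn, hgt⟩
  exact ⟨hn, fun a ha => lt_of_le_of_lt (Finset.le_sup (f := id) ha) hgt⟩

lemma uniform_not_empty_mem {ξ : Ordinal.{0}} {L : Set (Finset ℕ)} {M : Set ℕ}
    (h : IsUniform ξ L M) (hξ : ξ ≠ 0) : (∅ : Finset ℕ) ∉ L := by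
  cases h with
  | zero => exact absurd rfl hξ
  | succ ζ L M hsub hne h => exact hne
  | limit ξ L M hlim hsub hne ξm hmono hlt hsup h => exact hne

lemma famAt_rank {r : Ordinal.{0}} {L : Set (Finset ℕ)} {N : Set ℕ} {ℓ : ℕ}
    (h : IsUniform r L N) (hℓ : ℓ ∈ N) (hne : (famAt L ℓ).Nonempty) :
    ∃ r' < r, IsUniform r' (famAt L ℓ) (N ∩ Set.Ioi ℓ) := by
  cases h with
  | zero =>
    obtain ⟨u, hu⟩ := hne
    have : insert ℓ u = ∅ := hu.1
    exact absurd this (Finset.insert_ne_empty ℓ u)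
  | succ ζ L M hsub hne' h =>
    refine ⟨ζ, ?_, h ℓ hℓ⟩
    rw [Ordinal.add_one_eq_succ]
    exact Order.lt_succ ζ
  | limit ξ L M hlim hsub hne' ξm hmono hlt hsup h =>
    exact ⟨ξm ℓ, hlt ℓ hℓ, h ℓ hℓ⟩

lemma key_step {r₁ r₂ : Ordinal.{0}} {L₁ L₂ : Set (Finset ℕ)} {N : Set ℕ}
    (h12 : r₁ < r₂) (h₁ : IsUniform r₁ L₁ N) (h₂ : IsUniform r₂ L₂ N) :
    ∃ n₀ : ℕ, ∀ ℓ ∈ N, n₀ < ℓ → (famAt L₁ ℓ = ∅ ∨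
      ∃ r₁' r₂', r₁' < r₂' ∧ IsUniform r₁' (famAt L₁ ℓ) (N ∩ Set.Ioi ℓ) ∧
        IsUniform r₂' (famAt L₂ ℓ) (N ∩ Set.Ioi ℓ)) := by
  cases h₂ with
  | zero => exact absurd h12 (not_lt_zero' (a := r₁))
  | succ ζ L M hsub hne h =>
    refine ⟨0, fun ℓ hℓ _ => ?_⟩
    by_cases hempty : famAt L₁ ℓ = ∅
    · exact Or.inl hempty
    · obtain ⟨r₁', hr₁'lt, hr₁'⟩ :=
        famAt_rank h₁ hℓ (Set.nonempty_iff_ne_empty.mpr hempty)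
      have hr₁ζ : r₁ ≤ ζ := by
        rw [Ordinal.add_one_eq_succ] at h12
        exact Order.lt_succ_iff.mp h12
      exact Or.inr ⟨r₁', ζ, lt_of_lt_of_le hr₁'lt hr₁ζ, hr₁', h ℓ hℓ⟩
  | limit ξ L M hlim hsub hne ξm hmono hlt hsup h =>
    obtain ⟨m, hmN, hm⟩ := hsup r₁ h12
    refine ⟨m, fun ℓ hℓ hmℓ => ?_⟩
    by_cases hempty : famAt L₁ ℓ = ∅
    · exact Or.inl hempty
    · obtain ⟨r₁', hr₁'lt, hr₁'⟩ :=
        famAt_rank h₁ hℓ (Set.nonempty_iff_ne_empty.mpr hempty)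
      refine Or.inr ⟨r₁', ξm ℓ, ?_, hr₁', h ℓ hℓ⟩
      exact lt_of_lt_of_le hr₁'lt (hm.trans (hmono m hmN ℓ hℓ hmℓ).le)

/-- The invariant maintained along the construction. -/
def StepInv (M : Set ℕ) (𝓛₁ 𝓛₂ : Set (Finset ℕ)) (F : Finset ℕ) : Prop :=
  ↑F ⊆ M ∧ ∀ s ⊆ F, (sFam 𝓛₁ s).Nonempty →
    ∃ r₁ r₂ : Ordinal.{0}, r₁ < r₂ ∧ IsUniform r₁ (sFam 𝓛₁ s) (grd M s) ∧
      IsUniform r₂ (sFam 𝓛₂ s) (grd M s)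


lemma inv_step {M : Set ℕ} (hM : M.Infinite) {𝓛₁ 𝓛₂ : Set (Finset ℕ)}
    {F : Finset ℕ} (hF : StepInv M 𝓛₁ 𝓛₂ F) (n : ℕ) :
    ∃ ℓ ∈ M, n < ℓ ∧ (∀ a ∈ F, a < ℓ) ∧ StepInv M 𝓛₁ 𝓛₂ (insert ℓ F) := by
  have H : ∀ s : Finset ℕ, ∃ n₀ : ℕ, s ⊆ F →
      ∀ ℓ ∈ grd M s, n₀ < ℓ → (famAt (sFam 𝓛₁ s) ℓ = ∅ ∨
        ∃ r₁' r₂' : Ordinal.{0}, r₁' < r₂' ∧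
          IsUniform r₁' (famAt (sFam 𝓛₁ s) ℓ) (grd M s ∩ Set.Ioi ℓ) ∧
          IsUniform r₂' (famAt (sFam 𝓛₂ s) ℓ) (grd M s ∩ Set.Ioi ℓ)) := by
    intro s
    by_cases hsF : s ⊆ F
    · by_cases hne : (sFam 𝓛₁ s).Nonempty
      · obtain ⟨r₁, r₂, hlt, hu₁, hu₂⟩ := hF.2 s hsF hne
        obtain ⟨n₀, hn₀⟩ := key_step hlt hu₁ hu₂
        exact ⟨n₀, fun _ => hn₀⟩
      · refine ⟨0, fun _ ℓ _ _ => Or.inl ?_⟩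
        rw [Set.not_nonempty_iff_eq_empty] at hne
        rw [hne]; ext u; simp [famAt]
    · exact ⟨0, fun h => absurd h hsF⟩
  choose n₀ hn₀ using H
  set B := max n (max (F.sup id) (F.powerset.sup n₀)) with hB
  obtain ⟨ℓ, hℓM, hBℓ⟩ := hM.exists_gt B
  have hnℓ : n < ℓ := lt_of_le_of_lt (le_max_left _ _) hBℓ
  have hFℓ : ∀ a ∈ F, a < ℓ := fun a ha =>
    lt_of_le_of_lt (le_trans (Finset.le_sup (f := id) ha)
      (le_trans (le_max_left _ _) (le_max_right _ _))) hBℓ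
  refine ⟨ℓ, hℓM, hnℓ, hFℓ, ⟨?_, ?_⟩⟩
  · intro x hx
    rcases Finset.mem_insert.mp (by exact_mod_cast hx) with rfl | hx
    · exact hℓM
    · exact hF.1 hx
  · intro t ht htne
    by_cases hlt : ℓ ∈ t
    · set s := t.erase ℓ with hs
      have hsF : s ⊆ F := by
        intro a ha
        rcases Finset.mem_insert.mp (ht (Finset.mem_of_mem_erase ha)) with h | h
        · exact absurd h (Finset.ne_of_mem_erase ha)
        · exact h
      have hsl : ∀ a ∈ s, a < ℓ := fun a ha => hFℓ a (hsF ha)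
      have hts : t = insert ℓ s := (Finset.insert_erase hlt).symm
      have h1 : sFam 𝓛₁ t = famAt (sFam 𝓛₁ s) ℓ := by rw [hts, sFam_insert hsl]
      have h2 : sFam 𝓛₂ t = famAt (sFam 𝓛₂ s) ℓ := by rw [hts, sFam_insert hsl]
      have hgt : grd M t = grd M s ∩ Set.Ioi ℓ := by rw [hts, grd_insert]
      have hℓgrd : ℓ ∈ grd M s := ⟨hℓM, hsl⟩
      have hn₀ℓ : n₀ s < ℓ :=
        lt_of_le_of_lt (le_trans (Finset.le_sup (Finset.mem_powerset.mpr hsF))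
          (le_trans (le_max_right _ _) (le_max_right _ _))) hBℓ
      rcases hn₀ s hsF ℓ hℓgrd hn₀ℓ with hemp | ⟨r₁', r₂', hr, hu₁, hu₂⟩
      · rw [h1] at htne
        exact absurd hemp (Set.nonempty_iff_ne_empty.mp htne)
      · exact ⟨r₁', r₂', hr, by rw [h1, hgt]; exact hu₁,
          by rw [h2, hgt]; exact hu₂⟩
    · have htF : t ⊆ F := by
        intro a ha
        rcases Finset.mem_insert.mp (ht ha) with rfl | h
        · exact absurd ha hlt
        · exact h
      exact hF.2 t htF htne

/-- **Corollary 2.13.** If `ℒ₁` is `ξ₁`-uniform and `ℒ₂` is `ξ₂`-uniform on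
`M` with `ξ₁ < ξ₂`, then there is an infinite `L ⊆ M` with
`ℒ₁ ∩ [L]^{<ω} ⊆ (ℒ₂)* \ ℒ₂`. -/
theorem lower_uniform_in_star (M : Set ℕ) (hM : M.Infinite)
    (ξ₁ ξ₂ : Ordinal.{0}) (h12 : ξ₁ < ξ₂) (hξ₂ : ξ₂.card ≤ Cardinal.aleph0)
    (𝓛₁ 𝓛₂ : Set (Finset ℕ))
    (h₁ : IsUniform ξ₁ 𝓛₁ M) (h₂ : IsUniform ξ₂ 𝓛₂ M) :
    ∃ L : Set ℕ, L ⊆ M ∧ L.Infinite ∧ 𝓛₁ ∩ FinSubs L ⊆ famStar 𝓛₂ \ 𝓛₂ := by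
  classical
  have hnext : ∀ F : Finset ℕ, ∃ F' : Finset ℕ,
      StepInv M 𝓛₁ 𝓛₂ F → (StepInv M 𝓛₁ 𝓛₂ F' ∧ F ⊆ F' ∧ F.card < F'.card) := by
    intro F
    by_cases hF : StepInv M 𝓛₁ 𝓛₂ F
    · obtain ⟨ℓ, hℓM, _, hgt, hinv⟩ := inv_step hM hF 0
      refine ⟨insert ℓ F, fun _ => ⟨hinv, Finset.subset_insert _ _, ?_⟩⟩
      rw [Finset.card_insert_of_notMem (fun h => lt_irrefl ℓ (hgt ℓ h))]
      omega
    · exact ⟨F, fun h => absurd h hF⟩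
  choose nxt hnxt using hnext
  let f : ℕ → Finset ℕ := fun k => Nat.rec ∅ (fun _ ih => nxt ih) k
  have hfs : ∀ k, f (k + 1) = nxt (f k) := fun k => rfl
  have hbase : StepInv M 𝓛₁ 𝓛₂ ∅ := by
    refine ⟨by simp, ?_⟩
    intro s hs hne
    have hs' : s = ∅ := Finset.subset_empty.mp hs
    subst hs'
    refine ⟨ξ₁, ξ₂, h12, ?_, ?_⟩ <;>
      simp only [sFam, Finset.sort_empty, iterL, grd_empty] <;> assumption
  have hinv : ∀ k, StepInv M 𝓛₁ 𝓛₂ (f k) := by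
    intro k; induction k with
    | zero => exact hbase
    | succ k ih => exact ((hnxt (f k)) ih).1
  have hsub : ∀ k, f k ⊆ f (k + 1) := fun k => ((hnxt (f k)) (hinv k)).2.1
  have hcard : ∀ k, k ≤ (f k).card := by
    intro k; induction k with
    | zero => omega
    | succ k ih =>
      have := ((hnxt (f k)) (hinv k)).2.2
      have h2 : (f (k + 1)).card = (nxt (f k)).card := by rw [hfs]
      omega
  have hmonof : Monotone f :=
    monotone_nat_of_le_succ (fun n => Finset.le_iff_subset.mpr (hsub n))
  have hmono : ∀ {k m : ℕ}, k ≤ m → f k ⊆ f m :=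
    fun h => Finset.le_iff_subset.mp (hmonof h)
  set L : Set ℕ := {x | ∃ k, x ∈ f k} with hL
  have hLM : L ⊆ M := by
    rintro x ⟨k, hk⟩
    exact (hinv k).1 hk
  have hLinf : L.Infinite := by
    by_contra h
    rw [Set.not_infinite] at h
    have h1 : f (h.toFinset.card + 1) ⊆ h.toFinset := by
      intro x hx
      exact h.mem_toFinset.mpr ⟨h.toFinset.card + 1, hx⟩
    have h2 := Finset.card_le_card h1
    have h3 := hcard (h.toFinset.card + 1)
    omega
  refine ⟨L, hLM, hLinf, ?_⟩
  rintro s ⟨hs₁, hsL⟩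
  have hex : ∀ x : ℕ, ∃ k, x ∈ s → x ∈ f k := by
    intro x
    by_cases hx : x ∈ s
    · obtain ⟨k, hk⟩ := hsL hx
      exact ⟨k, fun _ => hk⟩
    · exact ⟨0, fun h => absurd h hx⟩
  choose g hg using hex
  have hsK : s ⊆ f (s.sup g) := fun x hx => hmono (Finset.le_sup hx) (hg x hx)
  have hne : (sFam 𝓛₁ s).Nonempty := ⟨∅, empty_mem_sFam.mpr hs₁⟩
  obtain ⟨r₁, r₂, hr, hu₁, hu₂⟩ := (hinv (s.sup g)).2 s hsK hne
  have hr₁0 : r₁ = 0 := by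
    by_contra h0
    exact uniform_not_empty_mem hu₁ h0 (empty_mem_sFam.mpr hs₁)
  have hr₂0 : r₂ ≠ 0 := by
    rw [hr₁0] at hr
    exact pos_iff_ne_zero.mp hr
  have hsnot : s ∉ 𝓛₂ := fun h =>
    uniform_not_empty_mem hu₂ hr₂0 (empty_mem_sFam.mpr h)
  obtain ⟨u, hu⟩ := uniform_nonempty hu₂ (grd_infinite hM s)
  rw [mem_sFam] at hu
  refine ⟨⟨s ∪ u, hu.1, Finset.subset_union_left, ?_⟩, hsnot⟩
  intro a ha b hb hab
  rcases Finset.mem_union.mp ha with h | h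
  · exact h
  · exact absurd hab (not_le.mpr (hu.2 b hb a h))
end

section
/- Let ℱ be a non-empty hereditary family of finite subsets of ℕ. The following are equivalent: (i) ℱ is pointwise closed; (ii) there does not exist an infinite sequence (s_i)_{i≥1} of elements of ℱ with s₁ ≺ s₂ ≺ ⋯ (each a proper initial segment of the next); (iii) there does not exist an infinite subset M of ℕ such that [M]^{<ω} ⊆ ℱ. -/
open Ordinal Filter Set

lemma approx_of_mem_closure {f : ℕ → Bool} {S : Set (ℕ → Bool)}
    (hf : f ∈ closure S) (I : Finset ℕ) : ∃ g ∈ S, ∀ n ∈ I, g n = f n := by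
  have hU : IsOpen {g : ℕ → Bool | ∀ n ∈ I, g n = f n} := by
    have h : {g : ℕ → Bool | ∀ n ∈ I, g n = f n} = ⋂ n ∈ I, (fun g : ℕ → Bool => g n) ⁻¹' {f n} := by
      ext g; simp
    rw [h]
    exact isOpen_biInter_finset fun n _ =>
      (continuous_apply n).isOpen_preimage _ (isOpen_discrete _)
  obtain ⟨g, hg1, hg2⟩ := mem_closure_iff.mp hf _ hU (fun n _ => rfl)
  exact ⟨g, hg2, hg1⟩

/-- **Proposition 2.14.** For a non-empty hereditary family `ℱ` of finite
subsets of `ℕ` the following are equivalent: (i) `ℱ` is pointwise closed;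
(ii) there is no sequence `(s_i)` in `ℱ` with each `s_i` a proper initial
segment of `s_{i+1}`; (iii) there is no infinite `M ⊆ ℕ` with
`[M]^{<ω} ⊆ ℱ`. -/
theorem closed_hereditary_characterization (F : Set (Finset ℕ))
    (hne : F.Nonempty) (hF : Hereditary F) :
    (PtwiseClosed F ↔
      ¬ ∃ s : ℕ → Finset ℕ, (∀ i, s i ∈ F) ∧ ∀ i, PInitSeg (s i) (s (i + 1))) ∧
    (PtwiseClosed F ↔ ¬ ∃ M : Set ℕ, M.Infinite ∧ FinSubs M ⊆ F) := by
  classical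
  -- (iii example) → (ii example): from an infinite M with [M]^{<ω} ⊆ F build a chain
  have Bconstr : (∃ M : Set ℕ, M.Infinite ∧ FinSubs M ⊆ F) →
      ∃ s : ℕ → Finset ℕ, (∀ i, s i ∈ F) ∧ ∀ i, PInitSeg (s i) (s (i + 1)) := by
    rintro ⟨M, hMinf, hMF⟩
    set p : ℕ → Prop := fun n => n ∈ M with hp
    have hpinf : (setOf p).Infinite := hMinf
    refine ⟨fun i => (Finset.range i).image (Nat.nth p), fun i => ?_, fun i => ?_⟩
    · apply hMF
      intro n hn
      simp only [Finset.coe_image, Set.mem_image] at hn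
      obtain ⟨j, _, rfl⟩ := hn
      exact Nat.nth_mem_of_infinite hpinf j
    · refine ⟨⟨Finset.image_subset_image (Finset.range_subset_range.mpr (Nat.le_succ i)), ?_⟩, ?_⟩
      · intro a ha b hb hab
        simp only [Finset.mem_image, Finset.mem_range] at ha hb ⊢
        obtain ⟨j, hj, rfl⟩ := ha
        obtain ⟨k, hk, rfl⟩ := hb
        rcases lt_or_ge j i with h | h
        · exact ⟨j, h, rfl⟩
        · have hji : j = i := le_antisymm (Nat.lt_succ_iff.mp hj) h
          have : Nat.nth p k < Nat.nth p j := (Nat.nth_lt_nth hpinf).mpr (hji ▸ hk)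
          exact absurd hab (not_le.mpr this)
      · intro heq
        dsimp only at heq
        have hi : Nat.nth p i ∈ (Finset.range i).image (Nat.nth p) := by
          rw [heq]
          exact Finset.mem_image_of_mem _ (Finset.mem_range.mpr (Nat.lt_succ_self i))
        simp only [Finset.mem_image, Finset.mem_range] at hi
        obtain ⟨k, hk, hkeq⟩ := hi
        have : Nat.nth p k < Nat.nth p i := (Nat.nth_lt_nth hpinf).mpr hk
        omega
  -- (i) → (ii)
  have A : PtwiseClosed F →
      ¬ ∃ s : ℕ → Finset ℕ, (∀ i, s i ∈ F) ∧ ∀ i, PInitSeg (s i) (s (i + 1)) := by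
    rintro hcl ⟨s, hsF, hchain⟩
    have hmono : Monotone s := monotone_nat_of_le_succ fun i => (hchain i).1.1
    set f : ℕ → Bool := fun n => decide (∃ i, n ∈ s i) with hfdef
    have htend : Filter.Tendsto (fun i => toChar (s i)) Filter.atTop (nhds f) := by
      rw [tendsto_pi_nhds]
      intro n
      by_cases hn : ∃ j, n ∈ s j
      · obtain ⟨j, hj⟩ := hn
        apply tendsto_const_nhds.congr'
        filter_upwards [Filter.eventually_ge_atTop j] with i hi
        have h1 : n ∈ s i := hmono hi hj
        have h2 : ∃ k, n ∈ s k := ⟨j, hj⟩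
        simp [hfdef, toChar, h1, h2]
      · apply tendsto_const_nhds.congr'
        filter_upwards with i
        have : n ∉ s i := fun h => hn ⟨i, h⟩
        simp [hfdef, toChar, this, hn]
    have hfcl : f ∈ closure (toChar '' F) :=
      mem_closure_of_tendsto htend (Filter.Eventually.of_forall fun i => ⟨s i, hsF i, rfl⟩)
    obtain ⟨B, hBF, hfB⟩ := hcl.closure_subset hfcl
    -- every s i ⊆ B
    have hsub : ∀ i, s i ⊆ B := by
      intro i n hn
      have hfn : f n = true := by
        have h2 : ∃ k, n ∈ s k := ⟨i, hn⟩
        simp [hfdef, h2]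
      have := congrFun hfB n
      rw [hfn] at this
      simpa [toChar] using this.symm
    have hcard : ∀ i, i ≤ (s i).card := by
      intro i
      induction i with
      | zero => exact Nat.zero_le _
      | succ k ih =>
        have hss : s k ⊂ s (k + 1) :=
          Finset.ssubset_iff_subset_ne.mpr ⟨(hchain k).1.1, (hchain k).2⟩
        have := Finset.card_lt_card hss
        omega
    have h1 := hcard (B.card + 1)
    have h2 := Finset.card_le_card (hsub (B.card + 1))
    omega
  -- (iii) → (i)
  have C : (¬ ∃ M : Set ℕ, M.Infinite ∧ FinSubs M ⊆ F) → PtwiseClosed F := by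
    intro hM
    apply isClosed_of_closure_subset
    intro f hf
    set Mf : Set ℕ := {n | f n = true} with hMf
    by_cases hfin : Mf.Finite
    · set t : Finset ℕ := hfin.toFinset with ht
      obtain ⟨g, hgS, hag⟩ := approx_of_mem_closure hf t
      obtain ⟨B, hBF, rfl⟩ := hgS
      have htB : t ⊆ B := by
        intro n hn
        have hfn : f n = true := by
          have := (Set.Finite.mem_toFinset hfin).mp hn
          exact this
        have := hag n hn
        rw [hfn] at this
        simpa [toChar] using this
      refine ⟨t, hF B hBF t htB, ?_⟩
      funext n
      have : n ∈ t ↔ f n = true := by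
        rw [ht, Set.Finite.mem_toFinset]; rfl
      cases hfn : f n with
      | true => simp [toChar, this.mpr hfn]
      | false =>
        have : n ∉ t := fun h => by rw [this.mp h] at hfn; exact Bool.noConfusion hfn
        simp [toChar, this]
    · exfalso
      apply hM
      refine ⟨Mf, hfin, ?_⟩
      · intro u hu
        obtain ⟨g, hgS, hag⟩ := approx_of_mem_closure hf u
        obtain ⟨B, hBF, rfl⟩ := hgS
        have huB : u ⊆ B := by
          intro n hn
          have hfn : f n = true := hu hn
          have := hag n hn
          rw [hfn] at this
          simpa [toChar] using this
        exact hF B hBF u huB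
  refine ⟨⟨A, fun h => C fun hMex => h (Bconstr hMex)⟩,
    ⟨fun hc hMex => A hc (Bconstr hMex), C⟩⟩
end

section
/- Let β be a countable ordinal and let ℒ be a family of finite subsets of ℕ such that ℒ_* and (ℒ(n))_* are pointwise closed for every n ∈ ℕ. If A is a non-empty finite set with A ∈ (ℒ_*)^β_M for some infinite subset M of ℕ, then there exist ℓ ∈ ℕ with ℓ ≤ min A and an infinite subset L of M such that A \ {ℓ} ∈ ((ℒ(ℓ))_*)^β_L. -/
open Ordinal Filter Set

open Topology

lemma toChar_injective : Function.Injective toChar := by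
  intro s t h
  ext n
  have := congrFun h n
  simpa [toChar, decide_eq_decide] using this

lemma mem_nhds_agree (x : ℕ → Bool) (n : ℕ) :
    {y : ℕ → Bool | ∀ i < n, y i = x i} ∈ 𝓝 x := by
  have h : {y : ℕ → Bool | ∀ i < n, y i = x i}
      = ⋂ i ∈ Finset.range n, (fun y : ℕ → Bool => y i) ⁻¹' {x i} := by
    ext y; simp [Finset.mem_range]
  rw [h]
  exact (Filter.biInter_finset_mem _).2 fun i _ =>
    IsOpen.mem_nhds ((isOpen_discrete _).preimage (continuous_apply i)) rfl

lemma exists_agree_subset {x : ℕ → Bool} {V : Set (ℕ → Bool)} (hV : V ∈ 𝓝 x) :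
    ∃ n, {y : ℕ → Bool | ∀ i < n, y i = x i} ⊆ V := by
  rw [nhds_pi, Filter.mem_pi] at hV
  obtain ⟨I, hI, t, ht, hsub⟩ := hV
  obtain ⟨m, hm⟩ := hI.bddAbove
  refine ⟨m + 1, fun y hy => hsub fun i hi => ?_⟩
  have hxy : y i = x i := hy i (Nat.lt_succ_of_le (hm hi))
  rw [hxy]
  have := ht i
  rw [nhds_discrete] at this
  exact this

lemma accPt_toChar_iff (A : Finset ℕ) (S : Set (Finset ℕ)) :
    AccPt (toChar A) (𝓟 (toChar '' S)) ↔
      ∀ n, ∃ B ∈ S, B ≠ A ∧ ∀ i < n, (i ∈ B ↔ i ∈ A) := by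
  rw [accPt_iff_nhds]
  constructor
  · intro h n
    obtain ⟨y, ⟨hyU, B, hBS, rfl⟩, hne⟩ := h _ (mem_nhds_agree (toChar A) n)
    refine ⟨B, hBS, fun e => hne (by rw [e]), fun i hi => ?_⟩
    have := hyU i hi
    simpa [toChar, decide_eq_decide] using this
  · intro h U hU
    obtain ⟨n, hn⟩ := exists_agree_subset hU
    obtain ⟨B, hBS, hBA, hag⟩ := h n
    refine ⟨toChar B, ⟨hn fun i hi => ?_, ⟨B, hBS, rfl⟩⟩,
      fun e => hBA (toChar_injective e)⟩
    simpa [toChar, decide_eq_decide] using hag i hi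

lemma Set.Infinite.inter_ioi {L : Set ℕ} (h : L.Infinite) (a : ℕ) :
    (L ∩ Set.Ioi a).Infinite := by
  have := h.diff (Set.finite_Iic a)
  rwa [Set.diff_eq, Set.compl_Iic] at this

lemma CBDeriv_zero (F : Set (Finset ℕ)) (M : Set ℕ) : CBDeriv F M 0 = F :=
  Ordinal.limitRecOn_zero _ _ _

lemma CBDeriv_succ (F : Set (Finset ℕ)) (M : Set ℕ) (o : Ordinal.{0}) :
    CBDeriv F M (Order.succ o) = derivOne M (CBDeriv F M o) :=
  Ordinal.limitRecOn_succ _ _ _ _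

lemma CBDeriv_limit (F : Set (Finset ℕ)) (M : Set ℕ) {o : Ordinal.{0}} (h : Order.IsSuccLimit o) :
    CBDeriv F M o = ⋂ (β : Ordinal.{0}) (_ : β < o), CBDeriv F M β :=
  Ordinal.limitRecOn_limit _ _ _ _ h

lemma CBDeriv_anti (F : Set (Finset ℕ)) (M : Set ℕ) (δ : Ordinal.{0}) :
    ∀ γ ≤ δ, CBDeriv F M δ ⊆ CBDeriv F M γ := by
  induction δ using Ordinal.induction with
  | _ δ ih =>
    intro γ hγ
    rcases eq_or_lt_of_le hγ with rfl | hlt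
    · exact subset_rfl
    rcases Ordinal.zero_or_succ_or_isSuccLimit δ with rfl | ⟨ξ, rfl⟩ | hδ
    · exact absurd hlt (by simp)
    · have h1 : CBDeriv F M (Order.succ ξ) ⊆ CBDeriv F M ξ := by
        rw [CBDeriv_succ]
        exact fun B hB => hB.1
      exact h1.trans (ih ξ (Order.lt_succ ξ) γ (Order.le_of_lt_succ hlt))
    · rw [CBDeriv_limit F M hδ]
      exact fun B hB => Set.mem_iInter₂.1 hB γ hlt

lemma famSub_hereditary (𝓛 : Set (Finset ℕ)) : Hereditary (famSub 𝓛) := by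
  rintro s ⟨u, hu, hsu⟩ t hts
  exact ⟨u, hu, hts.trans hsu⟩

lemma Hereditary.derivOne {F : Set (Finset ℕ)} (hF : Hereditary F) (M : Set ℕ) :
    Hereditary (derivOne M F) := by
  rintro A ⟨hAF, hAM, hAcc⟩ A' hA'
  refine ⟨hF A hAF A' hA', (Finset.coe_subset.2 hA').trans hAM, ?_⟩
  intro L hLM hLinf
  rw [accPt_toChar_iff]
  intro n
  obtain ⟨n', hn'A, hn'n⟩ : ∃ n', (∀ a ∈ A, a < n') ∧ n ≤ n' :=
    ⟨A.sup id + n + 1, fun a ha => by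
      have := Finset.le_sup (f := id) ha; simp only [id] at this; omega, by omega⟩
  have hL' : (L ∩ Set.Ioi n').Infinite := hLinf.inter_ioi n'
  obtain ⟨B, ⟨hBF, hBsub⟩, hBA, hag⟩ :=
    (accPt_toChar_iff _ _).1
      (hAcc (L ∩ Set.Ioi n') (Set.inter_subset_left.trans hLM) hL') n'
  have hAB : A ⊆ B := fun a ha => (hag a (hn'A a ha)).2 ha
  have hne : (B \ A).Nonempty := by
    rw [Finset.sdiff_nonempty]
    intro h
    exact hBA (Finset.Subset.antisymm h hAB)
  have hBAL : ∀ b ∈ B \ A, b ∈ L ∩ Set.Ioi n' := by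
    intro b hb
    have hbB := Finset.mem_sdiff.1 hb
    rcases hBsub hbB.1 with h | h
    · exact absurd (Finset.mem_coe.1 h) hbB.2
    · exact h
  refine ⟨A' ∪ (B \ A),
    ⟨hF B hBF _ (Finset.union_subset (hA'.trans hAB) (Finset.sdiff_subset)), ?_⟩, ?_, ?_⟩
  · intro x hx
    rcases Finset.mem_union.1 (Finset.mem_coe.1 hx) with h | h
    · exact Or.inl (Finset.mem_coe.2 h)
    · exact Or.inr (hBAL x h).1
  · obtain ⟨b, hb⟩ := hne
    intro e
    have hbU : b ∈ A' ∪ (B \ A) := Finset.mem_union_right _ hb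
    rw [e] at hbU
    have : b < n' := hn'A b (hA' hbU)
    exact absurd (hBAL b hb).2 (by simpa using this.le.not_gt)
  · intro i hi
    constructor
    · intro h
      rcases Finset.mem_union.1 h with h | h
      · exact h
      · have := (hBAL i h).2
        simp only [Set.mem_Ioi] at this
        omega
    · exact fun h => Finset.mem_union_left _ h

lemma CBDeriv_hereditary {F : Set (Finset ℕ)} (hF : Hereditary F) (M : Set ℕ)
    (β : Ordinal.{0}) : Hereditary (CBDeriv F M β) := by
  induction β using Ordinal.induction with
  | _ β ih =>
    rcases Ordinal.zero_or_succ_or_isSuccLimit β with rfl | ⟨ξ, rfl⟩ | hβ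
    · rwa [CBDeriv_zero]
    · rw [CBDeriv_succ]
      exact (ih ξ (Order.lt_succ ξ)).derivOne M
    · rw [CBDeriv_limit F M hβ]
      intro s hs t hts
      rw [Set.mem_iInter₂] at hs ⊢
      exact fun γ hγ => ih γ hγ s (hs γ hγ) t hts

lemma CBDeriv_transfer (F : Set (Finset ℕ)) (β : Ordinal.{0}) :
    ∀ (M L : Set ℕ) (A : Finset ℕ), (L \ M).Finite → ↑A ⊆ L →
      A ∈ CBDeriv F M β → A ∈ CBDeriv F L β := by
  induction β using Ordinal.induction with
  | _ β ih =>
    intro M L A hfin hAL hA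
    rcases Ordinal.zero_or_succ_or_isSuccLimit β with rfl | ⟨ξ, rfl⟩ | hβ
    · rwa [CBDeriv_zero] at hA ⊢
    · rw [CBDeriv_succ] at hA ⊢
      obtain ⟨hA1, hAM, hAcc⟩ := hA
      refine ⟨ih ξ (Order.lt_succ ξ) M L A hfin hAL hA1, hAL, ?_⟩
      intro L'' hL''L hL''inf
      have hsubd : L'' \ M ⊆ L \ M := fun x hx => ⟨hL''L hx.1, hx.2⟩
      have h1 : (L'' ∩ M).Infinite := by
        refine Set.Infinite.mono ?_ (hL''inf.diff (hfin.subset hsubd))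
        rintro x ⟨hx1, hx2⟩
        rcases Classical.em (x ∈ M) with h | h
        · exact ⟨hx1, h⟩
        · exact absurd (Set.mem_diff_of_mem hx1 h) hx2
      have hacc := hAcc (L'' ∩ M) Set.inter_subset_right h1
      refine hacc.mono (Filter.principal_mono.2 (Set.image_mono ?_))
      rintro B ⟨hB1, hB2⟩
      have hBL : ↑B ⊆ L := by
        intro x hx
        rcases hB2 hx with h | h
        · exact hAL h
        · exact hL''L h.1
      exact ⟨ih ξ (Order.lt_succ ξ) M L B hfin hBL hB1,
        hB2.trans (Set.union_subset_union_right _ Set.inter_subset_left)⟩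
    · rw [CBDeriv_limit F M hβ] at hA
      rw [CBDeriv_limit F L hβ]
      rw [Set.mem_iInter₂] at hA ⊢
      exact fun γ hγ => ih γ hγ M L A hfin hAL (hA γ hγ)

lemma exists_ext {F' : Set (Finset ℕ)} (hF' : Hereditary F') {M : Set ℕ} {A : Finset ℕ}
    (hA : A ∈ derivOne M F') {L : Set ℕ} (hLM : L ⊆ M) (hLinf : L.Infinite) (n : ℕ) :
    ∃ b ∈ L, n < b ∧ b ∉ A ∧ insert b A ∈ F' := by
  obtain ⟨hAF, hAM, hAcc⟩ := hA
  obtain ⟨n', hn'A, hn'n⟩ : ∃ n', (∀ a ∈ A, a < n') ∧ n < n' :=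
    ⟨A.sup id + n + 1, fun a ha => by
      have := Finset.le_sup (f := id) ha; simp only [id] at this; omega, by omega⟩
  have hL' : (L ∩ Set.Ioi n').Infinite := hLinf.inter_ioi n'
  obtain ⟨B, ⟨hBF, hBsub⟩, hBA, hag⟩ :=
    (accPt_toChar_iff _ _).1
      (hAcc (L ∩ Set.Ioi n') (Set.inter_subset_left.trans hLM) hL') n'
  have hAB : A ⊆ B := fun a ha => (hag a (hn'A a ha)).2 ha
  have hne : (B \ A).Nonempty := by
    rw [Finset.sdiff_nonempty]
    intro h
    exact hBA (Finset.Subset.antisymm h hAB)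
  obtain ⟨b, hb⟩ := hne
  have hbB := Finset.mem_sdiff.1 hb
  have hbL : b ∈ L ∩ Set.Ioi n' := by
    rcases hBsub hbB.1 with h | h
    · exact absurd (Finset.mem_coe.1 h) hbB.2
    · exact h
  exact ⟨b, hbL.1, lt_trans hn'n hbL.2, hbB.2,
    hF' B hBF _ (Finset.insert_subset hbB.1 hAB)⟩

lemma diag_rec (A : Finset ℕ) (M : Set ℕ) (hM : M.Infinite) (hAM : ↑A ⊆ M) (n₀ : ℕ)
    (R : ℕ → ℕ → ℕ → Set ℕ → Prop)
    (step : ∀ (k : ℕ) (M' : Set ℕ), M' ⊆ M → M'.Infinite → ↑A ⊆ M' → ∀ n : ℕ,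
      ∃ b ℓ L, n < b ∧ b ∈ M' ∧ L ⊆ M' ∧ L.Infinite ∧ R k b ℓ L) :
    ∃ (b ℓf : ℕ → ℕ) (L : ℕ → Set ℕ),
      StrictMono b ∧ (∀ k, n₀ < b k) ∧ (∀ k, b k ∈ M) ∧ (∀ k, L k ⊆ M) ∧
      (∀ k, (L k).Infinite) ∧
      (∀ j k, j < k → b k ∈ L j ∪ ↑A) ∧ (∀ j k, j < k → L k ⊆ L j ∪ ↑A) ∧
      (∀ k, R k (b k) (ℓf k) (L k)) := by
  classical
  have step' : ∀ (k : ℕ) (M' : Set ℕ) (n : ℕ),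
      ∃ b ℓ L, M' ⊆ M → M'.Infinite → ↑A ⊆ M' →
        (n < b ∧ b ∈ M' ∧ L ⊆ M' ∧ L.Infinite ∧ R k b ℓ L) := by
    intro k M' n
    by_cases h : M' ⊆ M ∧ M'.Infinite ∧ ↑A ⊆ M'
    · obtain ⟨b, ℓ, L, h1⟩ := step k M' h.1 h.2.1 h.2.2 n
      exact ⟨b, ℓ, L, fun _ _ _ => h1⟩
    · exact ⟨0, 0, ∅, fun h1 h2 h3 => absurd ⟨h1, h2, h3⟩ h⟩
  choose fb fl fL hstep using step'
  let st : ℕ → Set ℕ × ℕ := fun k =>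
    Nat.rec (M, n₀) (fun k p => (fL k p.1 p.2 ∪ ↑A, fb k p.1 p.2)) k
  refine ⟨fun k => fb k (st k).1 (st k).2, fun k => fl k (st k).1 (st k).2,
    fun k => fL k (st k).1 (st k).2, ?_⟩
  set b : ℕ → ℕ := fun k => fb k (st k).1 (st k).2 with hb
  set ℓf : ℕ → ℕ := fun k => fl k (st k).1 (st k).2 with hl
  set L : ℕ → Set ℕ := fun k => fL k (st k).1 (st k).2 with hL
  have hstS : ∀ k, st (k + 1) = (L k ∪ ↑A, b k) := fun k => rfl
  have inv : ∀ k, (st k).1 ⊆ M ∧ (st k).1.Infinite ∧ ↑A ⊆ (st k).1 := by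
    intro k
    induction k with
    | zero => exact ⟨subset_rfl, hM, hAM⟩
    | succ k ih =>
      obtain ⟨h1, h2, h3, h4, h5⟩ := hstep k (st k).1 (st k).2 ih.1 ih.2.1 ih.2.2
      rw [hstS]
      exact ⟨Set.union_subset (h3.trans ih.1) hAM, h4.mono Set.subset_union_left,
        Set.subset_union_right⟩
  have key : ∀ k, (st k).2 < b k ∧ b k ∈ (st k).1 ∧ L k ⊆ (st k).1 ∧
      (L k).Infinite ∧ R k (b k) (ℓf k) (L k) := by
    intro k
    obtain ⟨h1, h2, h3⟩ := inv k
    exact hstep k _ _ h1 h2 h3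
  have hmono : StrictMono b := by
    apply strictMono_nat_of_lt_succ
    intro k
    have := (key (k + 1)).1
    rwa [hstS] at this
  have hn₀ : ∀ k, n₀ < b k := by
    intro k
    have h0 : n₀ < b 0 := (key 0).1
    exact lt_of_lt_of_le h0 (hmono.monotone (Nat.zero_le k))
  have hnest : ∀ j k, j < k → (st k).1 ⊆ L j ∪ ↑A := by
    intro j k hjk
    induction k with
    | zero => omega
    | succ k ih =>
      rw [hstS]
      rcases Nat.lt_or_ge j k with h | h
      · refine Set.union_subset (((key k).2.2.1).trans (ih h) |>.trans ?_) ?_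
        · exact subset_rfl
        · exact Set.subset_union_right
      · have : j = k := by omega
        subst this
        exact subset_rfl
  exact ⟨hmono, hn₀, fun k => (inv k).1 ((key k).2.1),
    fun k => ((key k).2.2.1).trans (inv k).1, fun k => (key k).2.2.2.1,
    fun j k hjk => hnest j k hjk ((key k).2.1),
    fun j k hjk => ((key k).2.2.1).trans (hnest j k hjk),
    fun k => (key k).2.2.2.2⟩

lemma diag_fin {A : Finset ℕ} {ℓ : ℕ} {b : ℕ → ℕ} {L : ℕ → Set ℕ} {K : Set ℕ}
    (hnb : ∀ j k, j < k → b k ∈ L j ∪ ↑A) (k : ℕ) :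
    ((↑(A.erase ℓ) ∪ b '' K) \ L k).Finite := by
  apply Set.Finite.subset (A.finite_toSet.union ((Set.finite_Iic k).image b))
  rintro x ⟨hx, hxL⟩
  rcases hx with hx | ⟨j, _, rfl⟩
  · exact Or.inl ((Finset.coe_subset.2 (Finset.erase_subset ℓ A)) hx)
  · rcases Nat.lt_or_ge k j with h | h
    · rcases hnb k j h with h' | h'
      · exact absurd h' hxL
      · exact Or.inl h'
    · exact Or.inr ⟨j, Set.mem_Iic.2 h, rfl⟩

/-- **Lemma 1.15.** If `ℒ_*` and every `(ℒ(n))_*` are pointwise closed,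
`A ≠ ∅` and `A ∈ (ℒ_*)^β_M`, then there are `ℓ ≤ min A` and an infinite
`L ⊆ M` with `A \ {ℓ} ∈ ((ℒ(ℓ))_*)^β_L`. -/
theorem deriv_erase (β : Ordinal.{0}) (hβ : β.card ≤ Cardinal.aleph0)
    (𝓛 : Set (Finset ℕ)) (hc : PtwiseClosed (famSub 𝓛))
    (hcn : ∀ n : ℕ, PtwiseClosed (famSub (famAt 𝓛 n)))
    (A : Finset ℕ) (hA : A.Nonempty) (M : Set ℕ) (hM : M.Infinite)
    (hAd : A ∈ CBDeriv (famSub 𝓛) M β) :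
    ∃ ℓ : ℕ, ℓ ≤ A.min' hA ∧
      ∃ L : Set ℕ, L ⊆ M ∧ L.Infinite ∧
        A.erase ℓ ∈ CBDeriv (famSub (famAt 𝓛 ℓ)) L β := by
  clear hc hcn
  suffices H : ∀ β : Ordinal.{0}, β.card ≤ Cardinal.aleph0 →
      ∀ (A : Finset ℕ) (hA : A.Nonempty) (M : Set ℕ), M.Infinite →
      A ∈ CBDeriv (famSub 𝓛) M β →
      ∃ ℓ : ℕ, ℓ ≤ A.min' hA ∧ ∃ L : Set ℕ, L ⊆ M ∧ L.Infinite ∧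
        A.erase ℓ ∈ CBDeriv (famSub (famAt 𝓛 ℓ)) L β by
    exact H β hβ A hA M hM hAd
  clear hβ hA hM hAd A M β
  intro β
  induction β using Ordinal.induction with
  | _ β ih =>
  intro hβ A hA M hM hAd
  rcases Ordinal.zero_or_succ_or_isSuccLimit β with rfl | ⟨ξ, rfl⟩ | hlim
  -- ================== case β = 0 ==================
  · rw [CBDeriv_zero] at hAd
    obtain ⟨s, hs, hAs⟩ := hAd
    have hsne : s.Nonempty := hA.mono hAs
    refine ⟨s.min' hsne, Finset.min'_le s _ (hAs (A.min'_mem hA)), M, subset_rfl, hM, ?_⟩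
    rw [CBDeriv_zero]
    refine ⟨s.erase (s.min' hsne), ⟨?_, ?_⟩, Finset.erase_subset_erase _ hAs⟩
    · rw [Finset.insert_erase (s.min'_mem hsne)]
      exact hs
    · intro a ha
      have h2 := Finset.mem_erase.1 ha
      exact lt_of_le_of_ne (s.min'_le a h2.2) (Ne.symm h2.1)
  -- ================== case β = succ ξ ==================
  · have hξcard : ξ.card ≤ Cardinal.aleph0 :=
      le_trans (Ordinal.card_le_card (le_of_lt (Order.lt_succ ξ))) hβ
    rw [CBDeriv_succ] at hAd
    have hAM : ↑A ⊆ M := hAd.2.1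
    have hered : Hereditary (CBDeriv (famSub 𝓛) M ξ) :=
      CBDeriv_hereditary (famSub_hereditary 𝓛) M ξ
    have step : ∀ (k : ℕ) (M' : Set ℕ), M' ⊆ M → M'.Infinite → ↑A ⊆ M' → ∀ n : ℕ,
        ∃ b ℓ L, n < b ∧ b ∈ M' ∧ L ⊆ M' ∧ L.Infinite ∧
          (ℓ ≤ A.min' hA ∧ insert b (A.erase ℓ) ∈ CBDeriv (famSub (famAt 𝓛 ℓ)) L ξ) := by
      intro _k M' hM'M hM'inf hAM' n
      obtain ⟨b, hbM', hbgt, hbA, hbmem⟩ :=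
        exists_ext hered hAd hM'M hM'inf (max n (A.max' hA))
      have hbn : n < b := lt_of_le_of_lt (le_max_left _ _) hbgt
      have hbmax : A.max' hA < b := lt_of_le_of_lt (le_max_right _ _) hbgt
      have hmem' : insert b A ∈ CBDeriv (famSub 𝓛) M' ξ := by
        refine CBDeriv_transfer _ _ M M' _
          (by rw [Set.diff_eq_empty.2 hM'M]; exact Set.finite_empty) ?_ hbmem
        rw [Finset.coe_insert]
        exact Set.insert_subset hbM' hAM'
      obtain ⟨ℓ, hℓ, L, hLM', hLinf, hmem⟩ :=
        ih ξ (Order.lt_succ ξ) hξcard (insert b A) ⟨b, Finset.mem_insert_self b A⟩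
          M' hM'inf hmem'
      have hℓA : ℓ ≤ A.min' hA :=
        le_trans hℓ (Finset.min'_le _ _ (Finset.mem_insert_of_mem (A.min'_mem hA)))
      have hbne : b ≠ ℓ := by
        have hmm : A.min' hA ≤ A.max' hA := Finset.min'_le _ _ (A.max'_mem hA)
        omega
      rw [Finset.erase_insert_of_ne hbne] at hmem
      exact ⟨b, ℓ, L, hbn, hbM', hLM', hLinf, hℓA, hmem⟩
    obtain ⟨b, ℓf, L, hbmono, hbgt, hbM, hLM, hLinf, hbin, hLnest, hR⟩ :=
      diag_rec A M hM hAM (A.max' hA) _ step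
    let g : ℕ → Fin (A.min' hA + 1) := fun k => ⟨ℓf k, Nat.lt_succ_of_le (hR k).1⟩
    obtain ⟨y, hy⟩ := Finite.exists_infinite_fiber g
    have hKinf : (g ⁻¹' {y}).Infinite := Set.infinite_coe_iff.1 hy
    have hKl : ∀ k ∈ g ⁻¹' {y}, ℓf k = (y : ℕ) := by
      intro k hk
      have h3 : g k = y := hk
      exact congrArg Fin.val h3
    set ℓ := (y : ℕ) with hℓdef
    have hℓle : ℓ ≤ A.min' hA := Nat.lt_succ_iff.1 y.2
    set Lfin : Set ℕ := ↑(A.erase ℓ) ∪ b '' (g ⁻¹' {y}) with hLfin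
    have hLfinM : Lfin ⊆ M := by
      refine Set.union_subset
        ((Finset.coe_subset.2 (Finset.erase_subset ℓ A)).trans hAM) ?_
      rintro x ⟨k, _, rfl⟩
      exact hbM k
    have hLfininf : Lfin.Infinite :=
      Set.Infinite.mono Set.subset_union_right (hKinf.image (hbmono.injective.injOn))
    have hBk : ∀ k ∈ g ⁻¹' {y},
        insert (b k) (A.erase ℓ) ∈ CBDeriv (famSub (famAt 𝓛 ℓ)) Lfin ξ := by
      intro k hk
      have h1 := (hR k).2
      rw [hKl k hk] at h1
      refine CBDeriv_transfer _ _ (L k) Lfin _ (diag_fin hbin k) ?_ h1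
      rw [Finset.coe_insert]
      exact Set.insert_subset (Set.subset_union_right ⟨k, hk, rfl⟩) Set.subset_union_left
    obtain ⟨k0, hk0⟩ := hKinf.nonempty
    have hAe : A.erase ℓ ∈ CBDeriv (famSub (famAt 𝓛 ℓ)) Lfin ξ :=
      CBDeriv_hereditary (famSub_hereditary _) Lfin ξ _ (hBk k0 hk0) _
        (Finset.subset_insert _ _)
    refine ⟨ℓ, hℓle, Lfin, hLfinM, hLfininf, ?_⟩
    rw [CBDeriv_succ]
    refine ⟨hAe, Set.subset_union_left, ?_⟩
    intro L' hL'sub hL'inf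
    rw [accPt_toChar_iff]
    intro n
    have hinf' : (L' \ ↑(A.erase ℓ)).Infinite := hL'inf.diff (A.erase ℓ).finite_toSet
    obtain ⟨x, hx, hxgt⟩ := hinf'.exists_gt (max n (A.max' hA))
    obtain ⟨k, hkK, rfl⟩ : x ∈ b '' (g ⁻¹' {y}) := by
      rcases hL'sub hx.1 with h | h
      · exact absurd h hx.2
      · exact h
    refine ⟨insert (b k) (A.erase ℓ), ⟨hBk k hkK, ?_⟩, ?_, ?_⟩
    · rw [Finset.coe_insert]
      exact Set.insert_subset (Or.inr hx.1) Set.subset_union_left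
    · intro e
      have h5 : b k ∈ A.erase ℓ := by
        rw [← e]; exact Finset.mem_insert_self _ _
      have h6 : b k ≤ A.max' hA := Finset.le_max' _ _ (Finset.mem_of_mem_erase h5)
      omega
    · intro i hi
      simp only [Finset.mem_insert]
      constructor
      · rintro (rfl | h)
        · omega
        · exact h
      · exact fun h => Or.inr h
  -- ================== case β limit ==================
  · have hAγ : ∀ δ < β, A ∈ CBDeriv (famSub 𝓛) M δ := by
      rw [CBDeriv_limit _ _ hlim] at hAd
      exact fun δ hδ => Set.mem_iInter₂.1 hAd δ hδ
    have hAM : ↑A ⊆ M := by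
      have h1 := hAγ 1 (Ordinal.one_lt_of_isSuccLimit hlim)
      rw [show (1 : Ordinal.{0}) = Order.succ 0 by
        rw [← Ordinal.add_one_eq_succ, zero_add], CBDeriv_succ] at h1
      exact h1.2.1
    have hcount : (Set.Iio β).Countable := by
      rw [← Set.countable_coe_iff, ← Cardinal.mk_le_aleph0_iff, Ordinal.mk_Iio_ordinal]
      calc Cardinal.lift.{1} β.card ≤ Cardinal.lift.{1} Cardinal.aleph0 :=
            Cardinal.lift_le.2 hβ
        _ = Cardinal.aleph0 := by simp
    obtain ⟨e, he⟩ := hcount.exists_eq_range ⟨0, hlim.pos⟩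
    set γ : ℕ → Ordinal.{0} := fun k => (Finset.range (k + 1)).sup' (by simp) e with hγdef
    have hγlt : ∀ k, γ k < β := by
      intro k
      rw [Finset.sup'_lt_iff]
      intro i _
      have h7 : e i ∈ Set.Iio β := by rw [he]; exact ⟨i, rfl⟩
      exact h7
    have hγmono : Monotone γ := by
      intro j k hjk
      apply Finset.sup'_le
      intro i hi
      exact Finset.le_sup' e (Finset.mem_range.2 (lt_of_lt_of_le (Finset.mem_range.1 hi) (by omega)))
    have step : ∀ (k : ℕ) (M' : Set ℕ), M' ⊆ M → M'.Infinite → ↑A ⊆ M' → ∀ n : ℕ,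
        ∃ b ℓ L, n < b ∧ b ∈ M' ∧ L ⊆ M' ∧ L.Infinite ∧
          (ℓ ≤ A.min' hA ∧ A.erase ℓ ∈ CBDeriv (famSub (famAt 𝓛 ℓ)) L (γ k)) := by
      intro k M' hM'M hM'inf hAM' n
      have h1 : A ∈ CBDeriv (famSub 𝓛) M' (γ k) :=
        CBDeriv_transfer _ _ M M' A
          (by rw [Set.diff_eq_empty.2 hM'M]; exact Set.finite_empty) hAM' (hAγ _ (hγlt k))
      have hcard : (γ k).card ≤ Cardinal.aleph0 :=
        le_trans (Ordinal.card_le_card (le_of_lt (hγlt k))) hβ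
      obtain ⟨ℓ, hℓ, L, hLM', hLinf, hmem⟩ := ih (γ k) (hγlt k) hcard A hA M' hM'inf h1
      obtain ⟨x, hxL, hxgt⟩ := hLinf.exists_gt n
      exact ⟨x, ℓ, L, hxgt, hLM' hxL, hLM', hLinf, hℓ, hmem⟩
    obtain ⟨b, ℓf, L, hbmono, hbgt, hbM, hLM, hLinf, hbin, hLnest, hR⟩ :=
      diag_rec A M hM hAM 0 _ step
    let g : ℕ → Fin (A.min' hA + 1) := fun k => ⟨ℓf k, Nat.lt_succ_of_le (hR k).1⟩
    obtain ⟨y, hy⟩ := Finite.exists_infinite_fiber g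
    have hKinf : (g ⁻¹' {y}).Infinite := Set.infinite_coe_iff.1 hy
    have hKl : ∀ k ∈ g ⁻¹' {y}, ℓf k = (y : ℕ) := by
      intro k hk
      have h3 : g k = y := hk
      exact congrArg Fin.val h3
    set ℓ := (y : ℕ) with hℓdef
    have hℓle : ℓ ≤ A.min' hA := Nat.lt_succ_iff.1 y.2
    set Lfin : Set ℕ := ↑(A.erase ℓ) ∪ b '' (g ⁻¹' {y}) with hLfin
    have hLfinM : Lfin ⊆ M := by
      refine Set.union_subset
        ((Finset.coe_subset.2 (Finset.erase_subset ℓ A)).trans hAM) ?_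
      rintro x ⟨k, _, rfl⟩
      exact hbM k
    have hLfininf : Lfin.Infinite :=
      Set.Infinite.mono Set.subset_union_right (hKinf.image (hbmono.injective.injOn))
    have hAe : ∀ k ∈ g ⁻¹' {y},
        A.erase ℓ ∈ CBDeriv (famSub (famAt 𝓛 ℓ)) Lfin (γ k) := by
      intro k hk
      have h1 := (hR k).2
      rw [hKl k hk] at h1
      exact CBDeriv_transfer _ _ (L k) Lfin _ (diag_fin hbin k)
        Set.subset_union_left h1
    refine ⟨ℓ, hℓle, Lfin, hLfinM, hLfininf, ?_⟩
    rw [CBDeriv_limit _ _ hlim]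
    rw [Set.mem_iInter₂]
    intro δ hδ
    have h8 : δ ∈ Set.range e := by rw [← he]; exact hδ
    obtain ⟨j, rfl⟩ := h8
    obtain ⟨k, hkK, hjk⟩ := hKinf.exists_gt j
    have h1 : e j ≤ γ k :=
      le_trans (Finset.le_sup' e (Finset.self_mem_range_succ j)) (hγmono (le_of_lt hjk))
    exact CBDeriv_anti _ Lfin (γ k) (e j) h1 (hAe k hkK)
end
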